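/- arXiv:0912.2898 — 4 statements merged into one kernel-verified Lean document; each statement's English description precedes it below -/
import Mathlib

section
/- For all m ≥ 0 and n ≥ 1, d_m(n) = Σ (n! / (a_0! · a_1! ⋯ a_m!)) · 2^{a_1 + ⋯ + a_m}, where the sum runs over all tuples (a_0, a_1, …, a_m) of integers with a_0 ≥ 0, a_1, …, a_m ≥ 1 and a_0 + a_1 + ⋯ + a_m = n. -/
/-- The set `𝓑` of nonempty subsets `B` of `{-n, …, -1, 1, …, n}` such that for no
`i ∈ {1, …, n}` both `i` and `-i` belong to `B`. -/
def calB (n : ℕ) : Set (Finset ℤ) :=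
  {B | B.Nonempty ∧ (∀ z ∈ B, z ≠ 0 ∧ |z| ≤ (n : ℤ)) ∧
    ∀ i : ℤ, 1 ≤ i → i ≤ (n : ℤ) → ¬(i ∈ B ∧ -i ∈ B)}

/-- `d_m(n)`: the number of chains `B^{(m)} ⊊ ⋯ ⊊ B^{(1)}` of `m` elements of `𝓑`
(the number of `m`-dimensional cones of the fan `Σ(B_n)`); `d_0(n) = 1`. -/
noncomputable def dB (n m : ℕ) : ℕ :=
  Set.ncard {c : Fin m → Finset ℤ |
    (∀ k l : Fin m, k < l → c l ⊂ c k) ∧ ∀ k, c k ∈ calB n}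

open Finset MvPolynomial

section Bij
variable {n m : ℕ}


/-- the signed value corresponding to `i` and a sign -/
def sval {n : ℕ} (i : Fin n) (ε : Bool) : ℤ := cond ε ((i : ℤ) + 1) (-((i : ℤ) + 1))

def sgn (g : Fin n → Option (Fin m × Bool)) (i : Fin n) : Bool := (g i).elim true Prod.snd

def lv (g : Fin n → Option (Fin m × Bool)) (i : Fin n) : ℕ := (g i).elim 0 (fun p => (p.1 : ℕ) + 1)

def Phi (g : Fin n → Option (Fin m × Bool)) : Fin m → Finset ℤ := fun k =>
  (univ.filter fun i => (k : ℕ) < lv g i).image fun i => sval i (sgn g i)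

def Good (g : Fin n → Option (Fin m × Bool)) : Prop := ∀ k : Fin m, ∃ i ε, g i = some (k, ε)

lemma sval_true (i : Fin n) : sval i true = (i : ℤ) + 1 := rfl
lemma sval_false (i : Fin n) : sval i false = -((i : ℤ) + 1) := rfl

lemma ipos (i : Fin n) : (0 : ℤ) < (i : ℤ) + 1 := by positivity

lemma abs_sval (i : Fin n) (ε : Bool) : |sval i ε| = (i : ℤ) + 1 := by
  cases ε
  · rw [sval_false, abs_neg, abs_of_pos (ipos i)]
  · rw [sval_true, abs_of_pos (ipos i)]

lemma sval_ne_zero (i : Fin n) (ε : Bool) : sval i ε ≠ 0 := by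
  intro h
  have := abs_sval i ε
  rw [h, abs_zero] at this
  exact absurd this.symm (by have := ipos i; omega)

lemma sval_inj {i i' : Fin n} {ε ε' : Bool} (h : sval i ε = sval i' ε') : i = i' ∧ ε = ε' := by
  have habs : (i : ℤ) + 1 = (i' : ℤ) + 1 := by rw [← abs_sval i ε, ← abs_sval i' ε', h]
  have hii : i = i' := Fin.ext (by omega)
  subst hii
  refine ⟨rfl, ?_⟩
  cases ε <;> cases ε' <;> first
    | rfl
    | (exfalso; rw [sval_true, sval_false] at h; have := ipos i; omega)

lemma mem_Phi {g : Fin n → Option (Fin m × Bool)} {k : Fin m} {z : ℤ} :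
    z ∈ Phi g k ↔ ∃ i : Fin n, (k : ℕ) < lv g i ∧ sval i (sgn g i) = z := by
  simp [Phi]

lemma lv_le (g : Fin n → Option (Fin m × Bool)) (i : Fin n) : lv g i ≤ m := by
  unfold lv; cases h : g i with
  | none => simp
  | some p => simp [Nat.succ_le_of_lt p.1.isLt]

lemma lv_eq_zero_iff {g : Fin n → Option (Fin m × Bool)} {i : Fin n} :
    lv g i = 0 ↔ g i = none := by
  unfold lv; cases h : g i <;> simp

lemma lv_some {g : Fin n → Option (Fin m × Bool)} {i : Fin n} {k : Fin m} {ε : Bool}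
    (h : g i = some (k, ε)) : lv g i = (k : ℕ) + 1 := by unfold lv; rw [h]; rfl

lemma sgn_some {g : Fin n → Option (Fin m × Bool)} {i : Fin n} {k : Fin m} {ε : Bool}
    (h : g i = some (k, ε)) : sgn g i = ε := by unfold sgn; rw [h]; rfl

lemma sval_mem_Phi_iff {g : Fin n → Option (Fin m × Bool)} {k : Fin m} {i : Fin n} {ε : Bool} :
    sval i ε ∈ Phi g k ↔ (k : ℕ) < lv g i ∧ sgn g i = ε := by
  rw [mem_Phi]
  constructor
  · rintro ⟨i', hlt, heq⟩
    obtain ⟨hii, hss⟩ := sval_inj heq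
    subst hii; exact ⟨hlt, hss⟩
  · rintro ⟨h1, h2⟩; exact ⟨i, h1, by rw [h2]⟩

lemma Phi_subset {g : Fin n → Option (Fin m × Bool)} {k l : Fin m} (h : k ≤ l) :
    Phi g l ⊆ Phi g k := by
  intro z hz
  rw [mem_Phi] at hz ⊢
  obtain ⟨i, hlt, rfl⟩ := hz
  have hkl : (k : ℕ) ≤ (l : ℕ) := h
  exact ⟨i, by omega, rfl⟩

lemma Phi_ssubset {g : Fin n → Option (Fin m × Bool)} (hg : Good g) {k l : Fin m} (h : k < l) :
    Phi g l ⊂ Phi g k := by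
  refine ⟨Phi_subset h.le, fun hsub => ?_⟩
  obtain ⟨i, ε, hi⟩ := hg k
  have h1 : sval i ε ∈ Phi g k := by
    rw [sval_mem_Phi_iff, lv_some hi, sgn_some hi]; exact ⟨by omega, rfl⟩
  have h2 := hsub h1
  rw [sval_mem_Phi_iff, lv_some hi] at h2
  have : (k : ℕ) < (l : ℕ) := h
  omega

lemma Phi_calB {g : Fin n → Option (Fin m × Bool)} (hg : Good g) (k : Fin m) :
    Phi g k ∈ calB n := by
  refine ⟨?_, ?_, ?_⟩
  · obtain ⟨i, ε, hi⟩ := hg k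
    exact ⟨sval i ε, by rw [sval_mem_Phi_iff, lv_some hi, sgn_some hi]; exact ⟨by omega, rfl⟩⟩
  · intro z hz
    rw [mem_Phi] at hz
    obtain ⟨i, _, rfl⟩ := hz
    refine ⟨sval_ne_zero i _, ?_⟩
    rw [abs_sval]
    have : (i : ℕ) < n := i.isLt
    omega
  · rintro j h1 hjn ⟨hj, hnj⟩
    rw [mem_Phi] at hj hnj
    obtain ⟨i, _, hi⟩ := hj
    obtain ⟨i', _, hi'⟩ := hnj
    have habs : (i : ℤ) + 1 = (i' : ℤ) + 1 := by
      rw [← abs_sval i (sgn g i), ← abs_sval i' (sgn g i'), hi, hi', abs_neg]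
    have : i = i' := Fin.ext (by omega)
    subst this
    rw [hi] at hi'
    omega

lemma Phi_injective : Function.Injective (Phi : (Fin n → Option (Fin m × Bool)) → _) := by
  have aux : ∀ g g' : Fin n → Option (Fin m × Bool), Phi g = Phi g' →
      ∀ i, lv g i ≤ lv g' i := by
    intro g g' h i
    rcases Nat.eq_zero_or_pos (lv g i) with h0 | h0
    · omega
    · have hle := lv_le g i
      set k : Fin m := ⟨lv g i - 1, by omega⟩ with hk
      have h1 : sval i (sgn g i) ∈ Phi g k := by
        rw [sval_mem_Phi_iff]; exact ⟨by simp [hk]; omega, rfl⟩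
      rw [h] at h1
      rw [mem_Phi] at h1
      obtain ⟨i', hlt, heq⟩ := h1
      obtain ⟨hii, _⟩ := sval_inj heq
      subst hii
      simp only [hk] at hlt
      omega
  intro g g' h
  funext i
  have h1 := aux g g' h i
  have h2 := aux g' g h.symm i
  have hlv : lv g i = lv g' i := le_antisymm h1 h2
  rcases Nat.eq_zero_or_pos (lv g i) with h0 | h0
  · rw [lv_eq_zero_iff.mp h0, (lv_eq_zero_iff.mp (by omega : lv g' i = 0))]
  · have hle := lv_le g i
    set k : Fin m := ⟨lv g i - 1, by omega⟩ with hk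
    have hs : sval i (sgn g i) ∈ Phi g k := by
      rw [sval_mem_Phi_iff]; exact ⟨by simp [hk]; omega, rfl⟩
    rw [h] at hs
    rw [sval_mem_Phi_iff] at hs
    have hsgn : sgn g' i = sgn g i := hs.2
    -- reconstruct
    cases hgi : g i with
    | none => rw [lv_eq_zero_iff.mpr hgi] at h0; omega
    | some p =>
      cases hgi' : g' i with
      | none =>
        rw [lv_eq_zero_iff.mpr hgi'] at hlv
        exfalso; omega
      | some p' =>
        obtain ⟨k1, ε1⟩ := p
        obtain ⟨k2, ε2⟩ := p'
        have e1 := lv_some hgi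
        have e2 := lv_some hgi'
        have hk12 : k1 = k2 := Fin.ext (by omega)
        have s1 := sgn_some hgi
        have s2 := sgn_some hgi'
        have he : ε1 = ε2 := by rw [← s1, ← s2, hsgn]
        rw [hk12, he]

section Psi
variable (c : Fin m → Finset ℤ)

def SS (i : Fin n) : Finset (Fin m) :=
  univ.filter fun k => ((i : ℤ) + 1) ∈ c k ∨ -((i : ℤ) + 1) ∈ c k

def Psi : Fin n → Option (Fin m × Bool) := fun i =>
  if h : (SS c i).Nonempty then
    some ((SS c i).max' h, decide (((i : ℤ) + 1) ∈ c ((SS c i).max' h)))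
  else none

variable {c}
variable (hc : (∀ k l : Fin m, k < l → c l ⊂ c k) ∧ ∀ k, c k ∈ calB n)
include hc

lemma c_mono {k l : Fin m} (h : k ≤ l) : c l ⊆ c k := by
  rcases lt_or_eq_of_le h with h | h
  · exact (hc.1 k l h).subset
  · rw [h]

lemma not_both (i : Fin n) (k : Fin m) :
    ¬(((i : ℤ) + 1) ∈ c k ∧ -((i : ℤ) + 1) ∈ c k) := by
  refine (hc.2 k).2.2 ((i : ℤ) + 1) (by omega) ?_
  have : (i : ℕ) < n := i.isLt
  omega

lemma eq_of_mem_same_abs {i : Fin n} {ε₀ ε₁ : Bool} {k : Fin m}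
    (h0 : sval i ε₀ ∈ c k) (h1 : sval i ε₁ ∈ c k) : ε₀ = ε₁ := by
  cases ε₀ <;> cases ε₁
  · rfl
  · exact absurd ⟨h1, h0⟩ (not_both hc i k)
  · exact absurd ⟨h0, h1⟩ (not_both hc i k)
  · rfl

lemma mem_c_form {z : ℤ} {k : Fin m} (hz : z ∈ c k) : ∃ i : Fin n, ∃ ε, z = sval i ε := by
  obtain ⟨hz0, hzn⟩ := (hc.2 k).2.1 z hz
  have habs : (z.natAbs : ℤ) ≤ n := by rw [← Int.abs_eq_natAbs]; exact hzn
  have h1 : 1 ≤ z.natAbs := by omega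
  have h2 : z.natAbs - 1 < n := by omega
  refine ⟨⟨z.natAbs - 1, h2⟩, ?_⟩
  have hcast : ((⟨z.natAbs - 1, h2⟩ : Fin n) : ℤ) + 1 = (z.natAbs : ℤ) := by
    simp only [Fin.val_mk]; omega
  rcases lt_or_gt_of_ne hz0 with hneg | hpos
  · exact ⟨false, by rw [sval_false, hcast]; omega⟩
  · exact ⟨true, by rw [sval_true, hcast]; omega⟩

lemma Psi_spec (i : Fin n) (h : (SS c i).Nonempty) :
    lv (Psi c) i = (((SS c i).max' h : ℕ) + 1) ∧
      sval i (sgn (Psi c) i) ∈ c ((SS c i).max' h) := by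
  set K := (SS c i).max' h with hK
  have hKmem : K ∈ SS c i := (SS c i).max'_mem h
  rw [SS, mem_filter] at hKmem
  have hPsi : Psi c i = some (K, decide (((i : ℤ) + 1) ∈ c K)) := dif_pos h
  refine ⟨lv_some hPsi, ?_⟩
  rw [sgn_some hPsi]
  by_cases hmem : ((i : ℤ) + 1) ∈ c K
  · simpa [hmem, sval_true] using hmem
  · have : -((i : ℤ) + 1) ∈ c K := hKmem.2.resolve_left hmem
    simpa [hmem, sval_false] using this

omit hc in
lemma Psi_none (i : Fin n) (h : ¬(SS c i).Nonempty) : Psi c i = none := dif_neg h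

lemma mem_c_iff (k : Fin m) (z : ℤ) : z ∈ c k ↔ z ∈ Phi (Psi (n := n) c) k := by
  constructor
  · intro hz
    obtain ⟨i, ε₀, rfl⟩ := mem_c_form hc hz
    have hkS : k ∈ SS c i := by
      rw [SS, mem_filter]
      refine ⟨mem_univ _, ?_⟩
      cases ε₀
      · exact Or.inr (by rwa [sval_false] at hz)
      · exact Or.inl (by rwa [sval_true] at hz)
    have hne : (SS c i).Nonempty := ⟨k, hkS⟩
    obtain ⟨hlv, hmem⟩ := Psi_spec hc i hne
    have hkK : k ≤ (SS c i).max' hne := (SS c i).le_max' k hkS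
    have hmemk : sval i (sgn (Psi c) i) ∈ c k := c_mono hc hkK hmem
    have hee : ε₀ = sgn (Psi c) i := eq_of_mem_same_abs hc hz hmemk
    rw [hee, sval_mem_Phi_iff, hlv]
    have : (k : ℕ) ≤ ((SS c i).max' hne : ℕ) := hkK
    exact ⟨by omega, rfl⟩
  · intro hz
    rw [mem_Phi] at hz
    obtain ⟨i, hlt, rfl⟩ := hz
    have hne : (SS c i).Nonempty := by
      by_contra hno
      rw [lv_eq_zero_iff.mpr (Psi_none i hno)] at hlt
      omega
    obtain ⟨hlv, hmem⟩ := Psi_spec hc i hne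
    rw [hlv] at hlt
    have hkK : k ≤ (SS c i).max' hne := by
      have : (k : ℕ) ≤ ((SS c i).max' hne : ℕ) := by omega
      exact this
    exact c_mono hc hkK hmem

lemma Phi_Psi : Phi (Psi (n := n) c) = c := by
  funext k
  ext z
  exact (mem_c_iff hc k z).symm

lemma Good_Psi : Good (Psi (n := n) c) := by
  intro k
  have hz : ∃ z, z ∈ c k ∧ ∀ h : (k : ℕ) + 1 < m, z ∉ c ⟨(k : ℕ) + 1, h⟩ := by
    by_cases hkm : (k : ℕ) + 1 < m
    · obtain ⟨z, hz1, hz2⟩ := Finset.exists_of_ssubset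
        (hc.1 k ⟨(k : ℕ) + 1, hkm⟩ (by simp [Fin.lt_def]))
      exact ⟨z, hz1, fun _ => hz2⟩
    · obtain ⟨z, hz⟩ := (hc.2 k).1
      exact ⟨z, hz, fun h => absurd h hkm⟩
  obtain ⟨z, hzk, hznot⟩ := hz
  obtain ⟨i, ε₀, rfl⟩ := mem_c_form hc hzk
  have hkS : k ∈ SS c i := by
    rw [SS, mem_filter]
    refine ⟨mem_univ _, ?_⟩
    cases ε₀
    · exact Or.inr (by rwa [sval_false] at hzk)
    · exact Or.inl (by rwa [sval_true] at hzk)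
  have hne : (SS c i).Nonempty := ⟨k, hkS⟩
  set K := (SS c i).max' hne with hKdef
  have hkK : k ≤ K := (SS c i).le_max' k hkS
  obtain ⟨hlv, hmem⟩ := Psi_spec hc i hne
  have hKk : K ≤ k := by
    by_contra hlt
    push_neg at hlt
    have hkm : (k : ℕ) + 1 < m := by
      have h1 : (k : ℕ) < (K : ℕ) := hlt
      have h2 : (K : ℕ) < m := K.isLt
      omega
    have hk2K : (⟨(k : ℕ) + 1, hkm⟩ : Fin m) ≤ K := by
      have : (k : ℕ) < (K : ℕ) := hlt
      exact Fin.mk_le_of_le_val (by omega)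
    have hmem2 : sval i (sgn (Psi c) i) ∈ c ⟨(k : ℕ) + 1, hkm⟩ := c_mono hc hk2K hmem
    have hmemk : sval i (sgn (Psi c) i) ∈ c k := c_mono hc hkK hmem
    have hee : ε₀ = sgn (Psi c) i := eq_of_mem_same_abs hc hzk hmemk
    rw [← hee] at hmem2
    exact hznot hkm hmem2
  have hKeq : K = k := le_antisymm hKk hkK
  refine ⟨i, decide (((i : ℤ) + 1) ∈ c K), ?_⟩
  have hPsi : Psi c i = some (K, decide (((i : ℤ) + 1) ∈ c K)) := dif_pos hne
  rw [hPsi, hKeq]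

end Psi


section Count


/-- level of an option element -/
def levO {m : ℕ} (o : Option (Fin m × Bool)) : Fin (m + 1) := o.elim 0 (fun p => p.1.succ)

/-- fiber sizes of the level map -/
def fibs (n m : ℕ) (g : Fin n → Option (Fin m × Bool)) : Fin (m + 1) → ℕ :=
  fun j => (univ.filter fun i => levO (g i) = j).card

lemma prod_univ_X_pow {m : ℕ} (b : Fin (m + 1) →₀ ℕ) :
    (∏ j, (X j : MvPolynomial (Fin (m + 1)) ℕ) ^ b j) = monomial b 1 := by
  rw [← prod_X_pow_eq_monomial]
  exact (Finset.prod_subset (subset_univ _) (by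
    intro x _ hx
    simp [Finsupp.notMem_support_iff.mp hx])).symm

lemma count_fibs (n m : ℕ) (a : Fin (m + 1) → ℕ) (ha : ∑ j, a j = n) :
    ((univ : Finset (Fin n → Option (Fin m × Bool))).filter fun g => fibs n m g = a).card
      = Nat.multinomial univ a * 2 ^ (∑ j ∈ univ.erase 0, a j) := by
  classical
  set R := MvPolynomial (Fin (m + 1)) ℕ
  set c : Fin (m + 1) → ℕ := fun j => if j = 0 then 1 else 2 with hc
  set F : R := ∑ o : Option (Fin m × Bool), X (levO o) with hF
  set b : Fin (m + 1) →₀ ℕ := Finsupp.equivFunOnFinite.symm a with hb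
  have hinj : Function.Injective (Finsupp.equivFunOnFinite.symm : (Fin (m+1) → ℕ) → _) :=
    (Finsupp.equivFunOnFinite.symm).injective
  -- first expansion : F ^ n as a sum over g of monomials
  have h1 : F ^ n = ∑ g : Fin n → Option (Fin m × Bool),
      monomial (Finsupp.equivFunOnFinite.symm (fibs n m g)) (1 : ℕ) := by
    have : F ^ n = ∏ _i : Fin n, F := by simp
    rw [this, hF]
    rw [Finset.prod_univ_sum (fun _ : Fin n => (univ : Finset (Option (Fin m × Bool))))
      (fun _ o => (X (levO o) : R))]
    rw [Fintype.piFinset_univ]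
    refine Finset.sum_congr rfl fun g _ => ?_
    have h2 : ∏ i : Fin n, (X (levO (g i)) : R)
        = ∏ j : Fin (m + 1), (X j : R) ^ (fibs n m g j) := by
      rw [← Finset.prod_fiberwise (univ : Finset (Fin n)) (fun i => levO (g i))
        (fun i => (X (levO (g i)) : R))]
      refine Finset.prod_congr rfl fun j _ => ?_
      rw [show (∏ i ∈ univ.filter fun i => levO (g i) = j, (X (levO (g i)) : R))
          = ∏ i ∈ univ.filter fun i => levO (g i) = j, (X j : R) from
        Finset.prod_congr rfl fun i hi => by rw [(mem_filter.mp hi).2]]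
      rw [Finset.prod_const]
      rfl
    rw [h2, ← prod_univ_X_pow (Finsupp.equivFunOnFinite.symm (fibs n m g))]
    simp [Finsupp.equivFunOnFinite]
  -- coefficient of b in the first expansion
  have h2 : MvPolynomial.coeff b (F ^ n)
      = ((univ : Finset (Fin n → Option (Fin m × Bool))).filter fun g => fibs n m g = a).card := by
    rw [h1, MvPolynomial.coeff_sum]
    rw [Finset.card_filter]
    refine Finset.sum_congr rfl fun g _ => ?_
    rw [MvPolynomial.coeff_monomial]
    by_cases h : fibs n m g = a
    · simp [h, hb]
    · have : b ≠ Finsupp.equivFunOnFinite.symm (fibs n m g) := by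
        simp only [hb]; exact fun hh => h (hinj hh).symm
      simp [this.symm, h]
  -- second expansion : F as a linear combination of the X j
  have h3 : F = ∑ j : Fin (m + 1), ((c j : R) * X j) := by
    rw [hF, Fintype.sum_option, Fintype.sum_prod_type]
    rw [Fin.sum_univ_succ (f := fun j : Fin (m+1) => ((c j : R) * X j))]
    simp only [hc, levO]
    simp [Fin.succ_ne_zero, two_mul]
  -- coefficient of b in the second expansion
  have h4 : MvPolynomial.coeff b (F ^ n)
      = Nat.multinomial univ a * ∏ j, c j ^ a j := by
    rw [h3, Finset.sum_pow_eq_sum_piAntidiag univ (fun j => ((c j : R) * X j)) n,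
      MvPolynomial.coeff_sum]
    have hmem : a ∈ piAntidiag (univ : Finset (Fin (m+1))) n := by
      rw [mem_piAntidiag]; exact ⟨ha, fun i _ => mem_univ i⟩
    have key : ∀ k : Fin (m+1) → ℕ,
        ((Nat.multinomial univ k : R) * ∏ j, ((c j : R) * X j) ^ k j)
        = monomial (Finsupp.equivFunOnFinite.symm k)
            ((Nat.multinomial univ k * ∏ j, c j ^ k j : ℕ)) := by
      intro k
      have hX : (∏ j, (X j : R) ^ k j)
          = monomial (Finsupp.equivFunOnFinite.symm k) (1 : ℕ) := by
        rw [← prod_univ_X_pow (Finsupp.equivFunOnFinite.symm k)]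
        exact Finset.prod_congr rfl fun j _ => rfl
      have hcast : ∀ r : ℕ, ((r : ℕ) : R) = MvPolynomial.C r := fun r =>
        (MvPolynomial.C_eq_coe_nat r).symm
      rw [Finset.prod_congr rfl (fun j (_ : j ∈ univ) => mul_pow ((c j : R)) (X j) (k j))]
      rw [Finset.prod_mul_distrib, hX]
      rw [show (∏ x : Fin (m+1), ((c x : R)) ^ k x) = ((∏ x, c x ^ k x : ℕ) : R) by push_cast; rfl]
      rw [hcast, hcast, MvPolynomial.C_mul_monomial, MvPolynomial.C_mul_monomial, mul_one]
    rw [Finset.sum_eq_single a]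
    · rw [key a, MvPolynomial.coeff_monomial, if_pos rfl]
    · intro k hk hka
      have hbk : b ≠ Finsupp.equivFunOnFinite.symm k := by
        simp only [hb]; exact fun hh => hka (hinj hh).symm
      rw [key k, MvPolynomial.coeff_monomial, if_neg (fun h => hbk h.symm)]
    · intro h; exact absurd hmem h
  -- put things together
  have h5 : (∏ j, c j ^ a j) = 2 ^ (∑ j ∈ univ.erase 0, a j) := by
    rw [← Finset.mul_prod_erase univ _ (mem_univ (0 : Fin (m+1)))]
    have : ∏ j ∈ univ.erase (0 : Fin (m+1)), c j ^ a j
        = ∏ j ∈ univ.erase (0 : Fin (m+1)), 2 ^ a j := by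
      refine Finset.prod_congr rfl fun j hj => ?_
      rw [hc]; simp [(Finset.mem_erase.mp hj).1]
    rw [this, ← Finset.prod_pow_eq_pow_sum]
    simp [hc]
  have := h2.symm.trans h4
  -- this : card cast to ℕ? both sides are ℕ already
  rw [this, h5]


end Count

lemma step1 (n m : ℕ) :
    dB n m = ((univ : Finset (Fin n → Option (Fin m × Bool))).filter
      (fun g => ∀ k : Fin m, ∃ i ε, g i = some (k, ε))).card := by
  classical
  rw [dB]
  have himg : {c : Fin m → Finset ℤ |
      (∀ k l : Fin m, k < l → c l ⊂ c k) ∧ ∀ k, c k ∈ calB n}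
      = Phi '' {g : Fin n → Option (Fin m × Bool) | Good g} := by
    ext c
    constructor
    · intro hc
      exact ⟨Psi c, Good_Psi hc, Phi_Psi hc⟩
    · rintro ⟨g, hg, rfl⟩
      exact ⟨fun k l hkl => Phi_ssubset hg hkl, fun k => Phi_calB hg k⟩
  rw [himg, Set.ncard_image_of_injective _ Phi_injective]
  have hset : {g : Fin n → Option (Fin m × Bool) | Good g}
      = ↑((univ : Finset (Fin n → Option (Fin m × Bool))).filter
        (fun g => ∀ k : Fin m, ∃ i ε, g i = some (k, ε))) := by
    ext g; simp [Good]
  rw [hset, Set.ncard_coe_finset]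

lemma step2 (n m : ℕ) :
    ((univ : Finset (Fin n → Option (Fin m × Bool))).filter
      (fun g => ∀ k : Fin m, ∃ i ε, g i = some (k, ε))).card
    = ∑ a ∈ (Finset.Nat.antidiagonalTuple (m + 1) n).filter
        (fun a => ∀ i : Fin (m + 1), i ≠ 0 → 1 ≤ a i),
      (n.factorial / ∏ i, (a i).factorial) *
        2 ^ (∑ i ∈ Finset.univ.erase (0 : Fin (m + 1)), a i) := by
  classical
  set t := (Finset.Nat.antidiagonalTuple (m + 1) n).filter
    (fun a => ∀ i : Fin (m + 1), i ≠ 0 → 1 ≤ a i) with ht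
  have hsum : ∀ g : Fin n → Option (Fin m × Bool), ∑ j, fibs n m g j = n := by
    intro g
    have := Finset.card_eq_sum_card_fiberwise
      (s := (univ : Finset (Fin n))) (f := fun i : Fin n => levO (g i)) (t := (univ : Finset (Fin (m + 1))))
      (fun i _ => mem_univ _)
    simpa [fibs] using this.symm
  have hmaps : ∀ g ∈ (univ : Finset (Fin n → Option (Fin m × Bool))).filter
      (fun g => ∀ k : Fin m, ∃ i ε, g i = some (k, ε)), fibs n m g ∈ t := by
    intro g hg
    rw [mem_filter] at hg
    rw [ht, mem_filter, Finset.Nat.mem_antidiagonalTuple]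
    refine ⟨hsum g, fun j hj => ?_⟩
    obtain ⟨k, rfl⟩ := Fin.eq_succ_of_ne_zero hj
    obtain ⟨i, ε, hi⟩ := hg.2 k
    have : i ∈ univ.filter fun i => levO (g i) = k.succ := by
      rw [mem_filter]
      exact ⟨mem_univ _, by simp [levO, hi]⟩
    have hpos : 0 < (univ.filter fun i => levO (g i) = k.succ).card :=
      Finset.card_pos.mpr ⟨i, this⟩
    simpa [fibs] using hpos
  rw [Finset.card_eq_sum_card_fiberwise hmaps]
  refine Finset.sum_congr rfl fun a hat => ?_
  rw [ht, mem_filter, Finset.Nat.mem_antidiagonalTuple] at hat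
  have hfg : ((univ : Finset (Fin n → Option (Fin m × Bool))).filter
        (fun g => ∀ k : Fin m, ∃ i ε, g i = some (k, ε))).filter
        (fun g => fibs n m g = a)
      = (univ : Finset (Fin n → Option (Fin m × Bool))).filter
        (fun g => fibs n m g = a) := by
    rw [Finset.filter_filter]
    refine Finset.filter_congr fun g _ => ?_
    constructor
    · exact fun h => h.2
    · intro hfib
      refine ⟨fun k => ?_, hfib⟩
      have h1 : 1 ≤ a k.succ := hat.2 k.succ (Fin.succ_ne_zero k)
      rw [← hfib] at h1
      have : (univ.filter fun i => levO (g i) = k.succ).Nonempty := by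
        rw [← Finset.card_pos]; exact h1
      obtain ⟨i, hi⟩ := this
      rw [mem_filter] at hi
      cases hgi : g i with
      | none =>
        have h0 : levO (g i) = 0 := by rw [hgi]; rfl
        rw [h0] at hi
        exact absurd hi.2.symm (Fin.succ_ne_zero k)
      | some p =>
        have h0 : levO (g i) = p.1.succ := by rw [hgi]; rfl
        have : p.1.succ = k.succ := by rw [h0] at hi; exact hi.2
        have hp : p.1 = k := by
          have := Fin.succ_injective _ this
          exact this
        exact ⟨i, p.2, by rw [hgi, ← hp]⟩
  rw [hfg, count_fibs n m a hat.1]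
  congr 1
  rw [Nat.multinomial]
  congr 1
  rw [show ∑ i ∈ univ, a i = n from hat.1]

/-- `d_m(n) = Σ (n!/(a_0!·a_1!⋯a_m!)) · 2^{a_1+⋯+a_m}`, the sum running over all tuples
`(a_0, …, a_m)` with `a_0 ≥ 0`, `a_1, …, a_m ≥ 1` and `a_0 + ⋯ + a_m = n`. -/
theorem stmt5 (n m : ℕ) (hn : 1 ≤ n) :
    dB n m = ∑ a ∈ (Finset.Nat.antidiagonalTuple (m + 1) n).filter
        (fun a => ∀ i : Fin (m + 1), i ≠ 0 → 1 ≤ a i),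
      (n.factorial / ∏ i, (a i).factorial) *
        2 ^ (∑ i ∈ Finset.univ.erase (0 : Fin (m + 1)), a i) := by
  rw [step1 n m, step2 n m]
end Bij
end

section
/- For all m ≥ 0 and n ≥ 1, d_m(n)/n! equals the coefficient of x^n in the formal power series exp(x) · (exp(2x) − 1)^m ∈ ℚ[[x]], where exp(cx) = Σ_{k≥0} c^k x^k / k!. -/
/-!
Record a chain `B^{(m)} ⊊ ⋯ ⊊ B^{(1)}` in `𝓑` by the function sending `i ∈ {1, …, n}` to
the largest `j` with `±i ∈ B^{(j)}` together with that sign, or to `0` if `±i` lies in no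
`B^{(j)}`. This identifies the chains counted by `d_m(n)` with the functions
`{1, …, n} → {0} ∪ {1, …, m} × {±}` that hit every level `1, …, m`. Sorting all `(2m + 1)^n`
such functions by the set of levels they hit gives `∑_j C(m, j) d_j(n) = (2m + 1)^n`.
The same binomial transform of `n! [x^n] exp(x) (exp(2x) - 1)^j` is
`n! [x^n] exp(x) exp(2x)^m = (2m + 1)^n`, and a sequence is determined by its binomial transform.
-/

open Finset PowerSeries

theorem eq_of_forall_sum_choose_smul_eq {M : Type*} [AddCancelCommMonoid M] {a b : ℕ → M}
    (h : ∀ m, ∑ j ∈ range (m + 1), m.choose j • a j = ∑ j ∈ range (m + 1), m.choose j • b j) :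
    a = b := by
  funext m
  induction m using Nat.strong_induction_on with
  | _ m ih =>
    have hm := h m
    rw [sum_range_succ, sum_range_succ, Nat.choose_self, one_smul, one_smul,
      sum_congr rfl fun j hj => by rw [ih j (mem_range.1 hj)]] at hm
    exact add_left_cancel hm

theorem sum_choose_smul_exp_mul_rescale_sub_one_pow (c : ℚ) (m : ℕ) :
    ∑ j ∈ range (m + 1), m.choose j • (exp ℚ * (rescale c (exp ℚ) - 1) ^ j) =
      rescale (m * c + 1) (exp ℚ) :=
  calc _ = exp ℚ * (rescale c (exp ℚ) - 1 + 1) ^ m := by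
        rw [add_pow, mul_sum]
        refine sum_congr rfl fun j _ => ?_
        rw [one_pow, mul_one, nsmul_eq_mul]
        ring
    _ = rescale 1 (exp ℚ) * rescale (m * c) (exp ℚ) := by
        rw [sub_add_cancel, ← map_pow, exp_pow_eq_rescale_exp, rescale_rescale, rescale_one]
        rfl
    _ = _ := by rw [exp_mul_exp_eq_exp_add, add_comm]

theorem sum_choose_smul_factorial_mul_coeff (c : ℚ) (n m : ℕ) :
    ∑ j ∈ range (m + 1),
        m.choose j • ((n.factorial : ℚ) * coeff n (exp ℚ * (rescale c (exp ℚ) - 1) ^ j)) =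
      (m * c + 1) ^ n := by
  simp_rw [← mul_smul_comm, ← mul_sum, ← map_nsmul, ← map_sum,
    sum_choose_smul_exp_mul_rescale_sub_one_pow, coeff_rescale, coeff_exp]
  simp only [eq_ratCast, one_div, Rat.cast_inv, Rat.cast_natCast]
  field_simp

section LevelFunctions

variable {α β γ δ : Type*}

def HitsAllLevels (h : α → Option (γ × β)) : Prop :=
  ∀ k, ∃ a b, h a = some (k, b)

def levels [Fintype α] [Fintype β] [Fintype γ] [DecidableEq β] [DecidableEq γ]
    (h : α → Option (γ × β)) : Finset γ :=
  {k | ∃ a b, h a = some (k, b)}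

def relabelLevels (f : δ → γ) (h : α → Option (δ × β)) : α → Option (γ × β) :=
  fun a => (h a).map (Prod.map f id)

theorem relabelLevels_injective {f : δ → γ} (hf : Function.Injective f) :
    Function.Injective (relabelLevels (α := α) (β := β) f) :=
  (Option.map_injective (hf.prodMap Function.injective_id)).comp_left

theorem image_relabelLevels_hitsAllLevels {f : δ → γ} (hf : Function.Injective f) :
    relabelLevels f '' {h : α → Option (δ × β) | HitsAllLevels h} =
      {h | ∀ k, (∃ a b, h a = some (k, b)) ↔ k ∈ Set.range f} := by
  ext h
  constructor
  · rintro ⟨h', hh', rfl⟩ k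
    constructor
    · rintro ⟨a, b, hab⟩
      obtain ⟨⟨k', b'⟩, -, hk'⟩ := Option.map_eq_some_iff.1 hab
      exact ⟨k', congrArg Prod.fst hk'⟩
    · rintro ⟨k', rfl⟩
      obtain ⟨a, b, hab⟩ := hh' k'
      exact ⟨a, b, by simp [relabelLevels, hab]⟩
  · intro hh
    have hlift : ∀ a, ∃ o : Option (δ × β), h a = o.map (Prod.map f id) := by
      intro a
      cases ha : h a with
      | none => exact ⟨none, rfl⟩
      | some p =>
        obtain ⟨k', hk'⟩ := (hh p.1).1 ⟨a, p.2, ha⟩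
        exact ⟨some (k', p.2), by simp [hk']⟩
    choose h' hh' using hlift
    refine ⟨h', fun k' => ?_, funext fun a => (hh' a).symm⟩
    obtain ⟨a, b, hab⟩ := (hh (f k')).2 ⟨k', rfl⟩
    obtain ⟨⟨k'', b'⟩, hk'', hpair⟩ := Option.map_eq_some_iff.1 ((hh' a).symm.trans hab)
    simp only [Prod.map, id, Prod.mk.injEq] at hpair
    exact ⟨a, b, by rw [hk'', hf hpair.1, hpair.2]⟩

variable [Fintype α] [Fintype β] [DecidableEq α] [DecidableEq β]

theorem card_levels_eq [Fintype γ] [DecidableEq γ] (S : Finset γ) :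
    #{h : α → Option (γ × β) | levels h = S} =
      Nat.card {h : α → Option (Fin #S × β) // HitsAllLevels h} := by
  let f : Fin #S → γ := fun k => S.equivFin.symm k
  have hf : Function.Injective f := Subtype.val_injective.comp S.equivFin.symm.injective
  have hrange : Set.range f = S := by
    ext k
    exact ⟨fun ⟨k', hk'⟩ => hk' ▸ (S.equivFin.symm k').2,
      fun hk => ⟨S.equivFin ⟨k, hk⟩, by simp [f]⟩⟩
  have hfiber : ({h | levels h = S} : Finset (α → Option (γ × β))) =
      relabelLevels f '' {h : α → Option (Fin #S × β) | HitsAllLevels h} := by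
    rw [image_relabelLevels_hitsAllLevels hf, hrange]
    ext h
    simp [levels, Finset.ext_iff]
  rw [← Set.ncard_coe_finset, hfiber, Set.ncard_image_of_injective _ (relabelLevels_injective hf),
    ← Nat.card_coe_set_eq]
  rfl

theorem sum_choose_smul_card_hitsAllLevels (m : ℕ) :
    ∑ j ∈ range (m + 1), m.choose j • Nat.card {h : α → Option (Fin j × β) // HitsAllLevels h} =
      (m * Fintype.card β + 1) ^ Fintype.card α := by
  calc _ = ∑ S ∈ (univ : Finset (Fin m)).powerset,
        #{h : α → Option (Fin m × β) | levels h = S} := by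
        simp_rw [card_levels_eq]
        rw [sum_powerset_apply_card
          fun j => Nat.card {h : α → Option (Fin j × β) // HitsAllLevels h}, card_univ,
          Fintype.card_fin]
    _ = Fintype.card (α → Option (Fin m × β)) :=
        (card_eq_sum_card_fiberwise fun h _ => mem_powerset.2 (subset_univ _)).symm
    _ = _ := by simp [Fintype.card_option]

end LevelFunctions

section LevelChains

variable {α β ι : Type*} [Fintype α] [Fintype β] [DecidableEq β] [LinearOrder ι] [Fintype ι]

def levelChain (h : α → Option (ι × β)) (i : ι) : Finset (α × β) :=
  {p | ∃ k, i ≤ k ∧ h p.1 = some (k, p.2)}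

theorem mem_levelChain {h : α → Option (ι × β)} {i : ι} {p : α × β} :
    p ∈ levelChain h i ↔ ∃ k, i ≤ k ∧ h p.1 = some (k, p.2) := by
  simp [levelChain]

theorem antitone_levelChain (h : α → Option (ι × β)) : Antitone (levelChain h) :=
  fun _ _ hij _ hp =>
    let ⟨k, hjk, hk⟩ := mem_levelChain.1 hp
    mem_levelChain.2 ⟨k, hij.trans hjk, hk⟩

theorem injOn_fst_levelChain (h : α → Option (ι × β)) (i : ι) :
    Set.InjOn Prod.fst (levelChain h i : Set (α × β)) := by
  rintro ⟨a, b⟩ hp ⟨a', b'⟩ hq (rfl : a = a')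
  obtain ⟨k, -, hk⟩ := mem_levelChain.1 hp
  obtain ⟨k', -, hk'⟩ := mem_levelChain.1 hq
  simp_all

theorem levelChain_injective :
    Function.Injective (levelChain : (α → Option (ι × β)) → ι → Finset (α × β)) := by
  have key : ∀ {h h' : α → Option (ι × β)}, levelChain h = levelChain h' →
      ∀ {a k b}, h a = some (k, b) → ∃ k', k ≤ k' ∧ h' a = some (k', b) := fun e a k b hk =>
    (mem_levelChain (p := (a, b))).1 (by rw [← e]; exact mem_levelChain.2 ⟨k, le_rfl, hk⟩)
  have key' : ∀ {h h' : α → Option (ι × β)}, levelChain h = levelChain h' →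
      ∀ {a k b}, h a = some (k, b) → h' a = some (k, b) := by
    intro h h' e a k b hk
    obtain ⟨k', hkk', hk'⟩ := key e hk
    obtain ⟨k'', hk'k'', hk''⟩ := key e.symm hk'
    rw [hk, Option.some_inj, Prod.mk.injEq] at hk''
    rwa [le_antisymm hkk' (hk''.1 ▸ hk'k'')]
  intro h h' e
  funext a
  exact Option.ext fun p => ⟨key' e, key' e.symm⟩

theorem strictAnti_levelChain {h : α → Option (ι × β)} (hh : HitsAllLevels h) :
    StrictAnti (levelChain h) := by
  intro i j hij
  rw [ssubset_iff_of_subset (antitone_levelChain h hij.le)]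
  obtain ⟨a, b, hab⟩ := hh i
  refine ⟨(a, b), mem_levelChain.2 ⟨i, le_rfl, hab⟩, fun hj => ?_⟩
  obtain ⟨k, hjk, hk⟩ := mem_levelChain.1 hj
  rw [hab, Option.some_inj, Prod.mk.injEq] at hk
  exact (hjk.trans_lt (hk.1 ▸ hij)).false

theorem levelChain_nonempty {h : α → Option (ι × β)} (hh : HitsAllLevels h) (i : ι) :
    (levelChain h i).Nonempty :=
  let ⟨a, b, hab⟩ := hh i
  ⟨(a, b), mem_levelChain.2 ⟨i, le_rfl, hab⟩⟩

theorem hitsAllLevels_of_strictAnti {h : α → Option (ι × β)} (hc : StrictAnti (levelChain h))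
    (hne : ∀ i, (levelChain h i).Nonempty) : HitsAllLevels h := by
  intro i
  suffices ∃ p ∈ levelChain h i, ∀ j, i < j → p ∉ levelChain h j by
    obtain ⟨p, hp, hpj⟩ := this
    obtain ⟨k, hik, hk⟩ := mem_levelChain.1 hp
    obtain rfl | hik := hik.eq_or_lt
    · exact ⟨p.1, p.2, hk⟩
    · exact (hpj k hik (mem_levelChain.2 ⟨k, le_rfl, hk⟩)).elim
  by_cases htop : ∃ j, i < j
  · obtain ⟨j, hij⟩ := htop
    have hU : ({j | i < j} : Finset ι).Nonempty := ⟨j, by simp [hij]⟩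
    set j₀ := ({j | i < j} : Finset ι).min' hU
    have hij₀ : i < j₀ := (mem_filter.1 (min'_mem _ hU)).2
    obtain ⟨p, hp, hpj₀⟩ := exists_of_ssubset (hc hij₀)
    exact ⟨p, hp, fun j hij hpj =>
      hpj₀ (antitone_levelChain h (min'_le _ j (by simpa using hij)) hpj)⟩
  · obtain ⟨p, hp⟩ := hne i
    exact ⟨p, hp, fun j hij => (htop ⟨j, hij⟩).elim⟩

theorem exists_levelChain_eq {c : ι → Finset (α × β)} (hc : Antitone c)
    (hinj : ∀ i, Set.InjOn Prod.fst (c i : Set (α × β))) : ∃ h, levelChain h = c := by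
  classical
  have hlevel : ∀ a, ∃ o : Option (ι × β),
      ∀ i b, (a, b) ∈ c i ↔ ∃ k, i ≤ k ∧ o = some (k, b) := by
    intro a
    by_cases hex : ∃ i b, (a, b) ∈ c i
    · obtain ⟨i₀, b, hb⟩ := hex
      have hU : ({i | (a, b) ∈ c i} : Finset ι).Nonempty := ⟨i₀, by simpa using hb⟩
      set K := ({i | (a, b) ∈ c i} : Finset ι).max' hU
      have hK : (a, b) ∈ c K := by simpa using max'_mem _ hU
      refine ⟨some (K, b), fun i b' => ⟨fun hi => ?_, ?_⟩⟩
      · have hb' : b' = b := congrArg Prod.snd <| hinj (min i K)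
          (hc (min_le_left i K) hi) (hc (min_le_right i K) hK) rfl
        subst hb'
        exact ⟨K, le_max' _ i (by simpa using hi), rfl⟩
      · rintro ⟨k, hik, hk⟩
        rw [Option.some_inj, Prod.mk.injEq] at hk
        obtain ⟨rfl, rfl⟩ := hk
        exact hc hik hK
    · simp only [not_exists] at hex
      exact ⟨none, fun i b => by simp [hex i b]⟩
  choose h hh using hlevel
  exact ⟨h, funext fun i => Finset.ext fun p => mem_levelChain.trans (hh p.1 i p.2).symm⟩

theorem image_levelChain_hitsAllLevels :
    levelChain '' {h : α → Option (ι × β) | HitsAllLevels h} =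
      {c : ι → Finset (α × β) |
        StrictAnti c ∧ ∀ i, (c i).Nonempty ∧ Set.InjOn Prod.fst (c i : Set (α × β))} := by
  ext c
  constructor
  · rintro ⟨h, hh, rfl⟩
    exact ⟨strictAnti_levelChain hh, fun i => ⟨levelChain_nonempty hh i, injOn_fst_levelChain h i⟩⟩
  · rintro ⟨hc, hc'⟩
    obtain ⟨h, rfl⟩ := exists_levelChain_eq hc.antitone fun i => (hc' i).2
    exact ⟨h, hitsAllLevels_of_strictAnti hc fun i => (hc' i).1, rfl⟩

end LevelChains

section SignedIndex

def signedIndex (n : ℕ) : Fin n × Bool ↪ ℤ where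
  toFun p := bif p.2 then (p.1 : ℤ) + 1 else -((p.1 : ℤ) + 1)
  inj' := by
    rintro ⟨i, _ | _⟩ ⟨j, _ | _⟩ h <;> simp [Fin.ext_iff] at h ⊢ <;> omega

variable {n : ℕ}

@[simp]
theorem signedIndex_true (i : Fin n) : signedIndex n (i, true) = (i : ℤ) + 1 := rfl

@[simp]
theorem signedIndex_false (i : Fin n) : signedIndex n (i, false) = -((i : ℤ) + 1) := rfl

theorem exists_signedIndex_eq {z : ℤ} (hz : z ≠ 0) (hzn : |z| ≤ n) :
    ∃ p, signedIndex n p = z := by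
  rw [abs_le] at hzn
  rcases hz.lt_or_gt with hneg | hpos
  · exact ⟨(⟨(-z).toNat - 1, by omega⟩, false), by simp; omega⟩
  · exact ⟨(⟨z.toNat - 1, by omega⟩, true), by simp; omega⟩

theorem map_signedIndex_mem_calB_iff (B : Finset (Fin n × Bool)) :
    B.map (signedIndex n) ∈ calB n ↔
      B.Nonempty ∧ Set.InjOn Prod.fst (B : Set (Fin n × Bool)) := by
  have hbound : ∀ z ∈ B.map (signedIndex n), z ≠ 0 ∧ |z| ≤ n := by
    rintro _ hz
    obtain ⟨⟨i, _ | _⟩, -, rfl⟩ := mem_map.1 hz <;> simp [abs_le] <;> omega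
  have hsign : (∀ i : ℤ, 1 ≤ i → i ≤ n →
        ¬(i ∈ B.map (signedIndex n) ∧ -i ∈ B.map (signedIndex n))) ↔
      Set.InjOn Prod.fst (B : Set (Fin n × Bool)) := by
    constructor
    · rintro hs ⟨a, b⟩ hp ⟨a', b'⟩ hq (rfl : a = a')
      refine Prod.ext rfl (by_contra fun hbb => ?_)
      have hboth : (a, true) ∈ B ∧ (a, false) ∈ B := by
        cases b <;> cases b' <;> simp_all
      exact hs ((a : ℤ) + 1) (by omega) (by omega) ⟨mem_map_of_mem _ hboth.1,
        by simpa using mem_map_of_mem (signedIndex n) hboth.2⟩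
    · rintro hinj _ - - ⟨hi, hni⟩
      obtain ⟨p, hp, rfl⟩ := mem_map.1 hi
      obtain ⟨q, hq, hpq⟩ := mem_map.1 hni
      have hsplit : p.1 = q.1 ∧ p.2 ≠ q.2 := by
        rcases p with ⟨a, _ | _⟩ <;> rcases q with ⟨a', _ | _⟩ <;>
          simp [Fin.ext_iff] at hpq ⊢ <;> omega
      exact hsplit.2 (congrArg Prod.snd (hinj hp hq hsplit.1))
  change (B.map _).Nonempty ∧ (∀ z ∈ B.map (signedIndex n), z ≠ 0 ∧ |z| ≤ n) ∧ _ ↔ _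
  rw [map_nonempty, hsign]
  exact ⟨fun h => ⟨h.1, h.2.2⟩, fun h => ⟨h.1, hbound, h.2⟩⟩

theorem exists_map_signedIndex_eq {B : Finset ℤ} (hB : B ∈ calB n) :
    ∃ B' : Finset (Fin n × Bool), B'.map (signedIndex n) = B := by
  obtain ⟨B', -, hB'⟩ := subset_map_iff.1 fun z hz =>
    let ⟨p, hp⟩ := exists_signedIndex_eq (hB.2.1 z hz).1 (hB.2.1 z hz).2
    mem_map.2 ⟨p, mem_univ p, hp⟩
  exact ⟨B', hB'.symm⟩

end SignedIndex

theorem setOf_strictAnti_calB_eq_image (n m : ℕ) :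
    {c : Fin m → Finset ℤ | StrictAnti c ∧ ∀ k, c k ∈ calB n} =
      (fun c k => (c k).map (signedIndex n)) '' {c : Fin m → Finset (Fin n × Bool) |
        StrictAnti c ∧ ∀ k, (c k).Nonempty ∧ Set.InjOn Prod.fst (c k : Set (Fin n × Bool))} := by
  ext c
  constructor
  · rintro ⟨hc, hcB⟩
    choose c' hc' using fun k => exists_map_signedIndex_eq (hcB k)
    obtain rfl : (fun k => (c' k).map (signedIndex n)) = c := funext hc'
    exact ⟨c', ⟨fun k l hkl => map_ssubset_map.1 (hc hkl),
      fun k => (map_signedIndex_mem_calB_iff _).1 (hcB k)⟩, rfl⟩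
  · rintro ⟨c', ⟨hc', hc'B⟩, rfl⟩
    exact ⟨fun k l hkl => map_ssubset_map.2 (hc' hkl),
      fun k => (map_signedIndex_mem_calB_iff _).2 (hc'B k)⟩

theorem dB_eq_card_hitsAllLevels (n m : ℕ) :
    dB n m = Nat.card {h : Fin n → Option (Fin m × Bool) // HitsAllLevels h} := by
  have hinj : Function.Injective fun (h : Fin n → Option (Fin m × Bool)) k =>
      (levelChain h k).map (signedIndex n) :=
    (map_injective _).comp_left.comp levelChain_injective
  change Set.ncard {c : Fin m → Finset ℤ | StrictAnti c ∧ ∀ k, c k ∈ calB n} = _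
  rw [setOf_strictAnti_calB_eq_image, ← image_levelChain_hitsAllLevels, Set.image_image,
    Set.ncard_image_of_injective _ hinj, ← Nat.card_coe_set_eq]
  rfl

theorem stmt6_general (n m : ℕ) :
    (PowerSeries.coeff (R := ℚ) n)
        (PowerSeries.exp ℚ * (PowerSeries.rescale (2 : ℚ) (PowerSeries.exp ℚ) - 1) ^ m)
      = (dB n m : ℚ) / n.factorial := by
  have hsum : ∀ k, ∑ j ∈ range (k + 1), k.choose j •
      ((n.factorial : ℚ) * coeff n (exp ℚ * (rescale 2 (exp ℚ) - 1) ^ j)) =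
      ∑ j ∈ range (k + 1), k.choose j • (dB n j : ℚ) := fun k => by
    rw [sum_choose_smul_factorial_mul_coeff]
    simp_rw [dB_eq_card_hitsAllLevels]
    have hcount := sum_choose_smul_card_hitsAllLevels (α := Fin n) (β := Bool) k
    rw [Fintype.card_bool, Fintype.card_fin] at hcount
    simp only [nsmul_eq_mul] at hcount ⊢
    exact_mod_cast hcount.symm
  rw [eq_div_iff (by positivity), ← congrFun (eq_of_forall_sum_choose_smul_eq hsum) m, mul_comm]

/-- `d_m(n)/n!` is the coefficient of `x^n` in the formal power series
`exp(x)·(exp(2x) - 1)^m ∈ ℚ⟦x⟧`. -/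
theorem stmt6 (n m : ℕ) (hn : 1 ≤ n) :
    (PowerSeries.coeff (R := ℚ) n)
        (PowerSeries.exp ℚ * (PowerSeries.rescale (2 : ℚ) (PowerSeries.exp ℚ) - 1) ^ m)
      = (dB n m : ℚ) / n.factorial :=
  stmt6_general n m
end

section
/- In the ring of formal power series in one variable y with coefficients in the polynomial ring ℚ[t], the following identity holds: (t − E_2(y)) · Σ_{n≥0} (p_n(t)/n!) y^n = (t − 1) · E_1(y), where E_c(y) = Σ_{k≥0} (c(t−1))^k y^k / k!. Equivalently, Σ_{n≥0} (p_n(t)/n!) y^n = e^{y(t−1)} (t−1)/(t − e^{2y(t−1)}). -/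
/-- The Poincaré polynomial `p_n(t) = Σ_{m=0}^{n} d_m(n)·(t-1)^{n-m} ∈ ℚ[t]`
of the toric variety `X(B_n)` (with `p_0(t) = 1`). -/
noncomputable def pPoly (n : ℕ) : Polynomial ℚ :=
  ∑ m ∈ Finset.range (n + 1), (dB n m : Polynomial ℚ) * (Polynomial.X - 1) ^ (n - m)

/-- `E_c(y) = Σ_{k ≥ 0} (c(t-1))^k y^k / k!`, a power series in `y` over `ℚ[t]`. -/
noncomputable def Ey (c : ℚ) : PowerSeries (Polynomial ℚ) :=
  PowerSeries.mk fun k => (k.factorial : ℚ)⁻¹ • (Polynomial.C c * (Polynomial.X - 1)) ^ k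

/-! A chain of `m + 1` signed sets on a ground set of size `n` is determined by its smallest
member `E`, a nonempty signed set, and by the chain obtained by removing `E` from the other
members, which is a chain of `m` signed sets on the `n - k` coordinates outside the support of
`E` (of size `k`). As there are `C(n,k) 2^k` signed sets with a given support of size `k`,
`d_{m+1}(n) = ∑_{k ≥ 1} C(n,k) 2^k d_m(n-k)`. Summed against `(t-1)^{n-m}` this becomes
`t p_n = (t-1)^{n+1} + ∑_k C(n,k) (2(t-1))^k p_{n-k}`, the coefficient of `y^n/n!` in the
identity of exponential generating functions. -/

open Finset Polynomial
open scoped Pointwise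

def IsSignedSet (A B : Finset ℤ) : Prop :=
  B.Nonempty ∧ (∀ z ∈ B, |z| ∈ A) ∧ ∀ z ∈ B, -z ∉ B

def absSupport (B : Finset ℤ) : Finset ℤ := B.image (|·|)

section SignedSet

variable {A B E : Finset ℤ}

lemma IsSignedSet.subset_union_neg (h : IsSignedSet A B) : B ⊆ A ∪ A.image Neg.neg := by
  intro z hz
  rcases abs_choice z with hz' | hz'
  · exact mem_union_left _ (hz' ▸ h.2.1 z hz)
  · exact mem_union_right _ (mem_image.2 ⟨|z|, h.2.1 z hz, by rw [hz', neg_neg]⟩)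

lemma IsSignedSet.sdiff (hB : IsSignedSet A B) (hEB : E ⊂ B) :
    IsSignedSet (A \ absSupport E) (B \ E) := by
  refine ⟨sdiff_nonempty.2 hEB.2, fun z hz => ?_,
    fun z hz hnz => hB.2.2 z (mem_sdiff.1 hz).1 (mem_sdiff.1 hnz).1⟩
  obtain ⟨hzB, hzE⟩ := mem_sdiff.1 hz
  refine mem_sdiff.2 ⟨hB.2.1 z hzB, fun hzE' => ?_⟩
  obtain ⟨e, he, hez⟩ := mem_image.1 hzE'
  rcases abs_eq_abs.1 hez with rfl | rfl
  · exact hzE he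
  · exact hB.2.2 _ (hEB.1 he) (by rwa [neg_neg])

lemma IsSignedSet.disjoint_of_sdiff_absSupport (hB : IsSignedSet (A \ absSupport E) B) :
    Disjoint B E :=
  disjoint_left.2 fun z hzB hzE => (mem_sdiff.1 (hB.2.1 z hzB)).2 (mem_image_of_mem _ hzE)

lemma IsSignedSet.union (hE : IsSignedSet A E) (hB : IsSignedSet (A \ absSupport E) B) :
    IsSignedSet A (B ∪ E) := by
  have hsupp (z) (hz : z ∈ B) (e) (he : e ∈ E) : |z| ≠ |e| := fun h =>
    (mem_sdiff.1 (hB.2.1 z hz)).2 (mem_image.2 ⟨e, he, h.symm⟩)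
  refine ⟨hE.1.mono subset_union_right, fun z hz => ?_, fun z hz hnz => ?_⟩
  · rcases mem_union.1 hz with hz | hz
    · exact (mem_sdiff.1 (hB.2.1 z hz)).1
    · exact hE.2.1 z hz
  · rcases mem_union.1 hz with hz | hz <;> rcases mem_union.1 hnz with hnz | hnz
    · exact hB.2.2 z hz hnz
    · exact hsupp z hz (-z) hnz (abs_neg z).symm
    · exact hsupp (-z) hnz z hz (abs_neg z)
    · exact hE.2.2 z hz hnz

end SignedSet

open Classical in
noncomputable def signedSets (A : Finset ℤ) : Finset (Finset ℤ) :=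
  {B ∈ (A ∪ A.image Neg.neg).powerset | IsSignedSet A B}

open Classical in
noncomputable def signedChains (A : Finset ℤ) (m : ℕ) : Finset (Fin m → Finset ℤ) :=
  {c ∈ Fintype.piFinset fun _ => signedSets A | StrictAnti c}

lemma mem_signedSets {A B : Finset ℤ} : B ∈ signedSets A ↔ IsSignedSet A B := by
  simp only [signedSets, mem_filter, mem_powerset, and_iff_right_iff_imp]
  exact IsSignedSet.subset_union_neg

lemma mem_signedChains {A : Finset ℤ} {m : ℕ} {c : Fin m → Finset ℤ} :
    c ∈ signedChains A m ↔ StrictAnti c ∧ ∀ k, IsSignedSet A (c k) := by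
  simp [signedChains, mem_signedSets, and_comm]

lemma mem_signedChains_sdiff_last {A : Finset ℤ} {m : ℕ} {c : Fin (m + 1) → Finset ℤ}
    (hc : c ∈ signedChains A (m + 1)) :
    (fun k => c k.castSucc \ c (Fin.last m)) ∈
      signedChains (A \ absSupport (c (Fin.last m))) m := by
  obtain ⟨hanti, hsigned⟩ := mem_signedChains.1 hc
  have hlast (k : Fin m) : c (Fin.last m) ⊂ c k.castSucc := hanti (Fin.castSucc_lt_last k)
  refine mem_signedChains.2 ⟨fun k l hkl => ?_, fun k => (hsigned _).sdiff (hlast k)⟩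
  exact sdiff_lt_sdiff_right (hanti (Fin.castSucc_lt_castSucc_iff.2 hkl)) (hlast l).le

lemma snoc_union_mem_signedChains {A E : Finset ℤ} {m : ℕ} {c : Fin m → Finset ℤ}
    (hE : IsSignedSet A E) (hc : c ∈ signedChains (A \ absSupport E) m) :
    Fin.snoc (α := fun _ => Finset ℤ) (fun k => c k ∪ E) E ∈ signedChains A (m + 1) := by
  obtain ⟨hanti, hsigned⟩ := mem_signedChains.1 hc
  have hdisj (k : Fin m) := (hsigned k).disjoint_of_sdiff_absSupport
  refine mem_signedChains.2 ⟨fun k l hkl => ?_, fun k => ?_⟩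
  · obtain ⟨i, rfl⟩ :=
      Fin.exists_castSucc_eq.2 (Fin.ne_last_of_lt (hkl.trans_le (Fin.le_last l)))
    induction l using Fin.lastCases with
    | last =>
      simp only [Fin.snoc_last, Fin.snoc_castSucc]
      exact (hdisj i).right_lt_sup_of_left_ne_bot (hsigned i).1.ne_empty
    | cast j =>
      simp only [Fin.snoc_castSucc]
      exact sup_lt_sup_of_lt_of_inf_le_inf (hanti (Fin.castSucc_lt_castSucc_iff.1 hkl))
        (by rw [(hdisj i).eq_bot]; exact bot_le)
  · induction k using Fin.lastCases with
    | last => simpa using hE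
    | cast k => simpa using hE.union (hsigned k)

lemma card_signedChains_succ (A : Finset ℤ) (m : ℕ) :
    #(signedChains A (m + 1)) = ∑ E ∈ signedSets A, #(signedChains (A \ absSupport E) m) := by
  rw [← card_sigma]
  refine card_bij' (fun c _ => ⟨c (Fin.last m), fun k => c k.castSucc \ c (Fin.last m)⟩)
    (fun p _ => Fin.snoc (fun k => p.2 k ∪ p.1) p.1) (fun c hc => ?_) (fun p hp => ?_)
    (fun c hc => ?_) (fun p hp => ?_)
  · exact mem_sigma.2 ⟨mem_signedSets.2 ((mem_signedChains.1 hc).2 _),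
      mem_signedChains_sdiff_last hc⟩
  · obtain ⟨hE, hc⟩ := mem_sigma.1 hp
    exact snoc_union_mem_signedChains (mem_signedSets.1 hE) hc
  · have hanti := (mem_signedChains.1 hc).1
    ext1 k
    induction k using Fin.lastCases with
    | last => simp
    | cast k => simpa using sdiff_union_of_subset (hanti.antitone (Fin.le_last k.castSucc))
  · have hdisj (k : Fin m) :=
      ((mem_signedChains.1 (mem_sigma.1 hp).2).2 k).disjoint_of_sdiff_absSupport
    simp [union_sdiff_cancel_right (hdisj _)]

lemma mem_absSupport {B : Finset ℤ} {z : ℤ} :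
    z ∈ absSupport B ↔ 0 ≤ z ∧ (z ∈ B ∨ -z ∈ B) := by
  simp only [absSupport, mem_image]
  constructor
  · rintro ⟨b, hb, rfl⟩
    refine ⟨abs_nonneg b, ?_⟩
    rcases abs_choice b with h | h <;> rw [h] <;> simp [hb]
  · rintro ⟨hz, h | h⟩
    · exact ⟨z, h, abs_of_nonneg hz⟩
    · exact ⟨-z, h, by rw [abs_neg, abs_of_nonneg hz]⟩

lemma card_filter_absSupport_eq {A S : Finset ℤ} (hA : ∀ a ∈ A, 0 < a) (hSA : S ⊆ A)
    (hS : S.Nonempty) : #{E ∈ signedSets A | absSupport E = S} = 2 ^ #S := by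
  have hpos : ∀ z ∈ S, 0 < z := fun z hz => hA z (hSA hz)
  rw [← card_powerset]
  refine card_bij' (fun E _ => {z ∈ E | 0 < z}) (fun T _ => T ∪ -(S \ T)) ?_ ?_ ?_ ?_
  · intro E hE
    simp only [mem_filter, mem_signedSets, mem_powerset] at hE ⊢
    intro z hz
    rw [mem_filter] at hz
    rw [← hE.2, mem_absSupport]
    grind
  · intro T hT
    rw [mem_powerset] at hT
    have hmem (z : ℤ) : z ∈ T ∪ -(S \ T) ↔ z ∈ T ∨ (-z ∈ S ∧ -z ∉ T) := by
      simp
    have hsupp : absSupport (T ∪ -(S \ T)) = S := by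
      ext z
      simp only [mem_absSupport, hmem, neg_neg]
      grind
    simp only [mem_filter, mem_signedSets, IsSignedSet, hsupp, and_true]
    refine ⟨?_, fun z hz => ?_, fun z hz hnz => ?_⟩
    · exact image_nonempty.1 (hsupp ▸ hS)
    · exact hSA (hsupp ▸ mem_image_of_mem _ hz)
    · rw [hmem] at hz hnz
      grind
  · intro E hE
    simp only [mem_filter, mem_signedSets] at hE
    ext z
    simp only [mem_union, mem_filter, mem_neg, mem_sdiff, ← hE.2, mem_absSupport]
    have := hE.1.2.2 z
    grind
  · intro T hT
    rw [mem_powerset] at hT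
    ext z
    simp only [mem_filter, mem_union, mem_neg, mem_sdiff]
    grind

lemma sum_powerset_nonempty_apply_card {α M : Type*} [AddCommMonoid M] (x : Finset α)
    (g : ℕ → M) :
    ∑ S ∈ x.powerset with S.Nonempty, g #S = ∑ k ∈ Icc 1 #x, (#x).choose k • g k := by
  classical
  rw [← sum_fiberwise_of_maps_to (g := card) (t := Icc 1 #x) fun S hS => by
    simp only [mem_filter, mem_powerset] at hS
    exact mem_Icc.2 ⟨card_pos.2 hS.2, card_le_card hS.1⟩]
  refine sum_congr rfl fun k hk => ?_
  have hfiber : ({S ∈ x.powerset | S.Nonempty}.filter fun S => #S = k) = powersetCard k x := by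
    ext S
    simp only [mem_filter, mem_powerset, mem_powersetCard, and_congr_left_iff, ← card_pos]
    exact fun hS => and_iff_left (hS ▸ (mem_Icc.1 hk).1)
  rw [hfiber, sum_congr rfl fun S hS => by rw [(mem_powersetCard.1 hS).2], sum_const,
    card_powersetCard]

lemma sum_signedSets_apply_card_sdiff {M : Type*} [AddCommMonoid M] {A : Finset ℤ}
    (hA : ∀ a ∈ A, 0 < a) (f : ℕ → M) :
    ∑ E ∈ signedSets A, f #(A \ absSupport E) =
      ∑ k ∈ Icc 1 #A, ((#A).choose k * 2 ^ k) • f (#A - k) := by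
  rw [← sum_fiberwise_of_maps_to (g := absSupport) (t := {S ∈ A.powerset | S.Nonempty})
    fun E hE => have hE := mem_signedSets.1 hE
      mem_filter.2 ⟨mem_powerset.2 (image_subset_iff.2 hE.2.1), hE.1.image _⟩]
  have hfiber (S) (hS : S ∈ {S ∈ A.powerset | S.Nonempty}) :
      ∑ E ∈ signedSets A with absSupport E = S, f #(A \ absSupport E) =
        2 ^ #S • f (#A - #S) := by
    obtain ⟨hSA, hS⟩ := mem_filter.1 hS
    rw [sum_congr rfl fun E hE => by rw [(mem_filter.1 hE).2], sum_const,
      card_filter_absSupport_eq hA (mem_powerset.1 hSA) hS,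
      card_sdiff_of_subset (mem_powerset.1 hSA)]
  rw [sum_congr rfl hfiber, sum_powerset_nonempty_apply_card A fun k => 2 ^ k • f (#A - k)]
  simp only [mul_smul]

def dRec : ℕ → ℕ → ℕ
  | _, 0 => 1
  | n, m + 1 => ∑ k ∈ Icc 1 n, n.choose k * 2 ^ k * dRec (n - k) m

lemma card_signedChains_zero (A : Finset ℤ) : #(signedChains A 0) = 1 := by
  rw [card_eq_one]
  exact ⟨finZeroElim, eq_singleton_iff_unique_mem.2
    ⟨mem_signedChains.2 ⟨fun k => k.elim0, fun k => k.elim0⟩,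
      fun _ _ => Subsingleton.elim _ _⟩⟩

lemma card_signedChains {A : Finset ℤ} (hA : ∀ a ∈ A, 0 < a) (m : ℕ) :
    #(signedChains A m) = dRec #A m := by
  induction m generalizing A with
  | zero => exact card_signedChains_zero A
  | succ m ih =>
    rw [card_signedChains_succ,
      sum_congr rfl fun E _ => ih fun a ha => hA a (mem_sdiff.1 ha).1,
      sum_signedSets_apply_card_sdiff hA (dRec · m), dRec]
    simp only [smul_eq_mul, mul_assoc]

lemma mem_calB_iff {n : ℕ} {B : Finset ℤ} :
    B ∈ calB n ↔ IsSignedSet (Icc 1 (n : ℤ)) B := by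
  refine ⟨fun ⟨hne, hbound, hpair⟩ => ⟨hne, fun z hz => ?_, fun z hz hnz => ?_⟩,
    fun ⟨hne, hbound, hpair⟩ =>
      ⟨hne, fun z hz => ?_, fun i _ _ ⟨hi, hni⟩ => hpair i hi hni⟩⟩
  · exact mem_Icc.2 ⟨Int.one_le_abs (hbound z hz).1, (hbound z hz).2⟩
  · have h1 := Int.one_le_abs (hbound z hz).1
    have h2 := (hbound z hz).2
    rcases abs_choice z with h | h
    · exact hpair z (by omega) (by omega) ⟨hz, hnz⟩
    · exact hpair (-z) (by omega) (by omega) ⟨hnz, by rwa [neg_neg]⟩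
  · have := mem_Icc.1 (hbound z hz)
    exact ⟨fun h0 => by simp [h0] at this, this.2⟩

lemma dB_eq_dRec (n m : ℕ) : dB n m = dRec n m := by
  have hchains : {c : Fin m → Finset ℤ |
      (∀ k l : Fin m, k < l → c l ⊂ c k) ∧ ∀ k, c k ∈ calB n} =
      signedChains (Icc 1 (n : ℤ)) m := by
    ext c
    simp only [Set.mem_ofPred_eq, mem_coe, mem_signedChains, mem_calB_iff]
    rfl
  rw [dB, hchains, Set.ncard_coe_finset,
    card_signedChains (fun a ha => by have := mem_Icc.1 ha; omega), Int.card_Icc]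
  simp

lemma dRec_eq_zero_of_lt {n m : ℕ} (h : n < m) : dRec n m = 0 := by
  induction m generalizing n with
  | zero => omega
  | succ m ih => exact sum_eq_zero fun k hk => by rw [ih (by grind), mul_zero]

lemma pow_mul_pPoly_eq_sum {n N : ℕ} (h : n ≤ N) :
    (X - 1) ^ (N - n) * pPoly n =
      ∑ m ∈ range (N + 1), (dRec n m : ℚ[X]) * (X - 1) ^ (N - m) := by
  rw [pPoly, mul_sum, ← sum_subset (range_subset_range.2 (by omega : n + 1 ≤ N + 1))]
  · refine sum_congr rfl fun m hm => ?_
    rw [dB_eq_dRec, mul_left_comm, ← pow_add]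
    congr 2
    grind
  · intro m _ hm
    rw [dRec_eq_zero_of_lt (by grind), Nat.cast_zero, zero_mul]

lemma sum_range_succ_eq_add_sum_Icc {M : Type*} [AddCommMonoid M] (f : ℕ → M) (n : ℕ) :
    ∑ k ∈ range (n + 1), f k = f 0 + ∑ k ∈ Icc 1 n, f k := by
  rw [range_eq_Ico, sum_eq_sum_Ico_succ_bot n.succ_pos, zero_add, ← Ico_add_one_right_eq_Icc]
  rfl

lemma pPoly_recurrence (n : ℕ) :
    X * pPoly n = (X - 1) ^ (n + 1) +
      ∑ k ∈ range (n + 1), n.choose k • ((C 2 * (X - 1)) ^ k * pPoly (n - k)) := by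
  have hsummand (k : ℕ) (hk : k ∈ Icc 1 n) :
      ∑ m ∈ range (n + 1),
          ((n.choose k * 2 ^ k * dRec (n - k) m : ℕ) : ℚ[X]) * (X - 1) ^ (n - m) =
        n.choose k • ((C 2 * (X - 1)) ^ k * pPoly (n - k)) := by
    have := pow_mul_pPoly_eq_sum (Nat.sub_le n k)
    rw [Nat.sub_sub_self (mem_Icc.1 hk).2] at this
    rw [nsmul_eq_mul, mul_pow, C_ofNat, mul_assoc, this, mul_sum, mul_sum]
    refine sum_congr rfl fun m _ => ?_
    push_cast
    ring
  have hshift : (X - 1) * pPoly n = (X - 1) ^ (n + 1) +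
      ∑ k ∈ Icc 1 n, n.choose k • ((C 2 * (X - 1)) ^ k * pPoly (n - k)) := by
    calc (X - 1) * pPoly n
        = ∑ m ∈ range (n + 2), (dRec n m : ℚ[X]) * (X - 1) ^ (n + 1 - m) := by
          simpa using pow_mul_pPoly_eq_sum n.le_succ
      _ = (X - 1) ^ (n + 1) + ∑ m ∈ range (n + 1),
            ∑ k ∈ Icc 1 n,
              ((n.choose k * 2 ^ k * dRec (n - k) m : ℕ) : ℚ[X]) * (X - 1) ^ (n - m) := by
          rw [sum_range_succ', add_comm]
          simp [dRec, sum_mul]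
      _ = _ := by rw [sum_comm, sum_congr rfl hsummand]
  rw [sum_range_succ_eq_add_sum_Icc]
  simp only [Nat.choose_zero_right, pow_zero, one_mul, Nat.sub_zero, one_smul]
  linear_combination hshift

noncomputable def egf {R : Type*} [Semiring R] [Module ℚ R] (a : ℕ → R) : PowerSeries R :=
  PowerSeries.mk fun n => (n.factorial : ℚ)⁻¹ • a n

lemma coeff_egf {R : Type*} [Semiring R] [Module ℚ R] (a : ℕ → R) (n : ℕ) :
    PowerSeries.coeff n (egf a) = (n.factorial : ℚ)⁻¹ • a n :=
  PowerSeries.coeff_mk _ _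

lemma coeff_egf_mul_egf {R : Type*} [Semiring R] [Algebra ℚ R] (a b : ℕ → R) (n : ℕ) :
    PowerSeries.coeff n (egf a * egf b) =
      (n.factorial : ℚ)⁻¹ • ∑ k ∈ range (n + 1), n.choose k • (a k * b (n - k)) := by
  rw [PowerSeries.coeff_mul, Nat.sum_antidiagonal_eq_sum_range_succ_mk, smul_sum]
  refine sum_congr rfl fun k hk => ?_
  have hkn : k ≤ n := Nat.lt_succ_iff.1 (mem_range.1 hk)
  have hfact : (k.factorial : ℚ)⁻¹ * ((n - k).factorial : ℚ)⁻¹ =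
      (n.factorial : ℚ)⁻¹ * n.choose k := by
    have hchoose : (n.choose k : ℚ) ≠ 0 := by exact_mod_cast (Nat.choose_pos hkn).ne'
    rw [← Nat.choose_mul_factorial_mul_factorial hkn]
    push_cast
    field_simp
  rw [coeff_egf, coeff_egf, smul_mul_smul_comm, hfact, mul_smul, ← Nat.cast_smul_eq_nsmul ℚ]

/-- In `(ℚ[t])⟦y⟧`: `(t - E_2(y)) · Σ_{n≥0} (p_n(t)/n!) y^n = (t - 1) · E_1(y)`,
i.e. `Σ_{n≥0} (p_n(t)/n!) y^n = e^{y(t-1)}(t-1)/(t - e^{2y(t-1)})`. -/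
theorem stmt7 :
    (PowerSeries.C (R := Polynomial ℚ) Polynomial.X - Ey 2) *
        PowerSeries.mk (fun n => (n.factorial : ℚ)⁻¹ • pPoly n)
      = PowerSeries.C (R := Polynomial ℚ) (Polynomial.X - 1) * Ey 1 := by
  change (PowerSeries.C X - egf fun k => (C 2 * (X - 1)) ^ k) * egf pPoly =
    PowerSeries.C (X - 1) * egf fun k => (C 1 * (X - 1)) ^ k
  ext n
  rw [sub_mul, map_sub, PowerSeries.coeff_C_mul, PowerSeries.coeff_C_mul, coeff_egf_mul_egf,
    coeff_egf, coeff_egf, mul_smul_comm, mul_smul_comm, ← smul_sub, pPoly_recurrence]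
  simp only [map_one, one_mul, add_sub_cancel_right, pow_succ']
end

section
/- In ℤ[t] the identity Σ_{m=0}^{n} d_m(n)·(t−1)^{n−m} = Σ_w t^{|Desc(w)|} holds, where the right-hand sum runs over all 2^n·n! signed permutations w of {1, …, n}. In particular, for each i the Betti number β_{2i}(X(B_n)) equals the number of signed permutations of {1, …, n} with exactly i descents. -/
/-- `w : Fin n → ℤ` is a signed permutation of `{1, …, n}`: a function to
`{-n, …, -1, 1, …, n}` such that `k ↦ |w k|` is a bijection onto `{1, …, n}`.
(Here `w k` stands for the value `w(k+1)` of the paper, `k = 0, …, n-1`.) -/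
def SignedPerm (n : ℕ) (w : Fin n → ℤ) : Prop :=
  (∀ k, 1 ≤ |w k| ∧ |w k| ≤ (n : ℤ)) ∧
  ∀ m : ℤ, 1 ≤ m → m ≤ (n : ℤ) → ∃! k : Fin n, |w k| = m

/-- The descent set `Desc(w) = {k ∈ {1, …, n} : w(k-1) > w(k)}` of a signed
permutation `w`, with the convention `w(0) = 0`. -/
def descSet (n : ℕ) (w : Fin n → ℤ) : Finset (Fin n) :=
  Finset.univ.filter fun k : Fin n =>
    w k < (if (k : ℕ) = 0 then (0 : ℤ)
           else w ⟨(k : ℕ) - 1, lt_of_le_of_lt (Nat.sub_le _ _) k.isLt⟩)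

/-!
A chain `B^(m) ⊊ ⋯ ⊊ B^(1)` in `𝓑` is the same thing as a function `g : {1, …, n} → ℤ` such that
`|g|` takes every value `1, …, m` and none above `m`: `|g(i)|` is the number of members containing
`i` or `-i`, and the sign of `g(i)` says which of the two. Listing the signed letters (`+i` if
`g(i) > 0`, else `-i`) by increasing level `|g(i)|`, and decreasingly within a level, gives a
signed permutation `w`; the positions where the level does not go up form a set `S ⊆ Desc(w)` of
size `n - m`, and the level at position `k` is the number of positions `≤ k` outside `S`, so
`(w, S)` determines `g`. Hence `d_m(n) = Σ_w C(|Desc(w)|, n - m)`, and the identity follows by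
expanding `t ^ |Desc(w)| = ((t - 1) + 1) ^ |Desc(w)|` binomially.
-/

open Finset

namespace Fin

variable {n : ℕ} {α : Type*}

lemma val_lt_card_filter_iff {P : Fin n → Prop} [DecidablePred P]
    (hP : ∀ k l, k ≤ l → P l → P k) (k : Fin n) : (k : ℕ) < #{l | P l} ↔ P k := by
  constructor
  · intro h
    by_contra hk
    have : ({l | P l} : Finset (Fin n)) ⊆ Iio k := fun l hl => by
      simp only [mem_filter, mem_univ, true_and] at hl
      exact mem_Iio.mpr (lt_of_not_ge fun hkl => hk (hP k l hkl hl))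
    have := card_le_card this
    rw [Fin.card_Iio] at this
    omega
  · intro h
    have : Iic k ⊆ ({l | P l} : Finset (Fin n)) := fun l hl => by
      simpa using hP l k (mem_Iic.mp hl) h
    have := card_le_card this
    rw [Fin.card_Iic] at this
    omega

lemma val_eq_zero_or_exists_val_eq_succ (k : Fin n) :
    (k : ℕ) = 0 ∨ ∃ j : Fin n, (k : ℕ) = j + 1 := by
  rcases Nat.eq_zero_or_eq_succ_pred (k : ℕ) with h | h
  · exact Or.inl h
  · exact Or.inr ⟨⟨(k : ℕ).pred, by omega⟩, h⟩

def prevOr (f : Fin n → α) (a : α) (k : Fin n) : α :=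
  if (k : ℕ) = 0 then a else f ⟨(k : ℕ) - 1, lt_of_le_of_lt (Nat.sub_le _ _) k.isLt⟩

lemma prevOr_of_val_eq_zero (f : Fin n → α) (a : α) {k : Fin n} (hk : (k : ℕ) = 0) :
    prevOr f a k = a := if_pos hk

lemma prevOr_of_val_eq_succ (f : Fin n → α) (a : α) {j k : Fin n} (hk : (k : ℕ) = j + 1) :
    prevOr f a k = f j := by
  rw [prevOr, if_neg (by omega)]
  congr 1
  ext
  simp only
  omega

lemma prevOr_le [Preorder α] {f : Fin n → α} (hf : Monotone f) {a : α} {k : Fin n}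
    (ha : a ≤ f k) : prevOr f a k ≤ f k := by
  obtain h0 | ⟨j, hjk⟩ := k.val_eq_zero_or_exists_val_eq_succ
  · rwa [prevOr_of_val_eq_zero _ _ h0]
  · rw [prevOr_of_val_eq_succ _ _ hjk]
    exact hf (le_def.mpr (by omega))

lemma eq_of_forall_eq_step_prevOr {f f' : Fin n → α} {a : α} (step : α → Fin n → α)
    (hf : ∀ k, f k = step (prevOr f a k) k) (hf' : ∀ k, f' k = step (prevOr f' a k) k) :
    f = f' := by
  funext ⟨k, hk⟩
  induction k with
  | zero => rw [hf, hf', prevOr_of_val_eq_zero _ _ rfl, prevOr_of_val_eq_zero _ _ rfl]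
  | succ k ih =>
    rw [hf, hf', prevOr_of_val_eq_succ _ _ (j := ⟨k, by omega⟩) rfl,
      prevOr_of_val_eq_succ _ _ (j := ⟨k, by omega⟩) rfl, ih]

lemma monotone_of_forall_val_eq_succ [Preorder α] {f : Fin n → α}
    (h : ∀ j k : Fin n, (k : ℕ) = j + 1 → f j ≤ f k) : Monotone f := by
  cases n with
  | zero => exact fun j => j.elim0
  | succ n => exact monotone_iff_le_succ.mpr fun j => h _ _ (by simp)

end Fin

lemma pow_eq_sum_range_choose_mul_sub_one_pow {R : Type*} [CommRing R] (x : R) {d N : ℕ}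
    (hd : d ≤ N) : x ^ d = ∑ j ∈ range (N + 1), (d.choose j : R) * (x - 1) ^ j := by
  calc x ^ d = (x - 1 + 1) ^ d := by rw [sub_add_cancel]
    _ = ∑ j ∈ range (d + 1), (d.choose j : R) * (x - 1) ^ j := by
      rw [add_pow]
      exact sum_congr rfl fun j _ => by rw [one_pow, mul_one, mul_comm]
    _ = ∑ j ∈ range (N + 1), (d.choose j : R) * (x - 1) ^ j :=
      sum_subset (range_subset_range.mpr (by omega)) fun j _ hj => by
        rw [Nat.choose_eq_zero_of_lt (by rw [mem_range] at hj; omega), Nat.cast_zero, zero_mul]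

namespace TypeBFan

variable {n m : ℕ}

def label (i : Fin n) : ℤ := (i : ℕ) + 1

lemma label_pos (i : Fin n) : 0 < label i := by unfold label; omega

lemma label_injective : Function.Injective (label (n := n)) := fun i j h => by
  unfold label at h; exact Fin.ext (by omega)

lemma label_ne_neg_label (i j : Fin n) : label i ≠ -label j := by
  have := label_pos i; have := label_pos j; omega

lemma abs_label (i : Fin n) : |label i| = label i := abs_of_pos (label_pos i)

lemma label_le (i : Fin n) : label i ≤ n := by unfold label; omega

lemma exists_eq_label_or_eq_neg_label {x : ℤ} (hx : x ≠ 0) (hxn : |x| ≤ n) :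
    ∃ i : Fin n, x = label i ∨ x = -label i := by
  rw [Int.abs_eq_natAbs] at hxn
  refine ⟨⟨x.natAbs - 1, by omega⟩, ?_⟩
  simp only [label]
  omega

/-! ### Chains in `𝓑` and level functions -/

structure IsBChain (n m : ℕ) (c : Fin m → Finset ℤ) : Prop where
  ssubset : ∀ k l, k < l → c l ⊂ c k
  mem_calB : ∀ k, c k ∈ calB n

structure IsLevelFn (m : ℕ) (g : Fin n → ℤ) : Prop where
  natAbs_le : ∀ i, (g i).natAbs ≤ m
  exists_natAbs_eq : ∀ j, 1 ≤ j → j ≤ m → ∃ i, (g i).natAbs = j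

def depth (c : Fin m → Finset ℤ) (x : ℤ) : ℤ := #{l | x ∈ c l} - #{l | -x ∈ c l}

def levelFnOfChain (c : Fin m → Finset ℤ) (i : Fin n) : ℤ := depth c (label i)

def chainOfLevelFn (m : ℕ) (g : Fin n → ℤ) (k : Fin m) : Finset ℤ :=
  (univ.filter fun i => (k : ℤ) < g i).image label ∪
    (univ.filter fun i => g i < -k).image (-label ·)

lemma depth_neg (c : Fin m → Finset ℤ) (x : ℤ) : depth c (-x) = -depth c x := by
  simp only [depth, neg_neg]; ring

namespace IsBChain

variable {c : Fin m → Finset ℤ} (hc : IsBChain n m c)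
include hc

lemma antitone {k l : Fin m} (h : k ≤ l) : c l ⊆ c k := by
  rcases h.eq_or_lt with rfl | h
  · exact Subset.rfl
  · exact (hc.ssubset k l h).subset

lemma neg_notMem {k l : Fin m} {x : ℤ} (hx : x ∈ c k) : -x ∉ c l := by
  intro hy
  obtain ⟨-, habs, hnot⟩ := hc.mem_calB (min k l)
  have hx' := hc.antitone (min_le_left k l) hx
  have hy' := hc.antitone (min_le_right k l) hy
  obtain ⟨hx0, hxn⟩ := habs x hx'
  rcases lt_or_gt_of_ne hx0 with h | h
  · exact hnot (-x) (by omega) (by rw [abs_of_neg h] at hxn; omega) ⟨hy', by simpa using hx'⟩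
  · exact hnot x (by omega) (by rwa [abs_of_pos h] at hxn) ⟨hx', hy'⟩

lemma mem_iff_lt_depth {k : Fin m} {x : ℤ} : x ∈ c k ↔ (k : ℤ) < depth c x := by
  have hlower : ∀ y : ℤ, ∀ k l : Fin m, k ≤ l → y ∈ c l → y ∈ c k :=
    fun y k l hkl hy => hc.antitone hkl hy
  have hP := Fin.val_lt_card_filter_iff (hlower x) k
  constructor
  · intro hx
    have hN : #{l | -x ∈ c l} = 0 := by
      rw [card_eq_zero, filter_eq_empty_iff]
      exact fun l _ => hc.neg_notMem hx
    have := hP.mpr hx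
    unfold depth
    omega
  · intro h
    unfold depth at h
    exact hP.mp (by omega)

lemma mem_iff_of_eq_label {k : Fin m} {x : ℤ} (i : Fin n) (hx : x = label i ∨ x = -label i) :
    x ∈ c k ↔ x = label i ∧ (k : ℤ) < levelFnOfChain c i ∨
      x = -label i ∧ levelFnOfChain c i < -k := by
  unfold levelFnOfChain
  have := label_ne_neg_label i i
  rcases hx with rfl | rfl
  · rw [hc.mem_iff_lt_depth]
    constructor
    · intro h; left; exact ⟨rfl, h⟩
    · rintro (⟨-, h⟩ | ⟨h, -⟩) <;> omega
  · rw [hc.mem_iff_lt_depth, depth_neg]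
    constructor
    · intro h; right; exact ⟨rfl, by omega⟩
    · rintro (⟨h, -⟩ | ⟨-, h⟩) <;> omega

end IsBChain

lemma natAbs_depth_le (c : Fin m → Finset ℤ) (x : ℤ) : (depth c x).natAbs ≤ m := by
  have h1 := card_le_univ (s := ({l | x ∈ c l} : Finset (Fin m)))
  have h2 := card_le_univ (s := ({l | -x ∈ c l} : Finset (Fin m)))
  simp only [Fintype.card_fin] at h1 h2
  unfold depth
  omega

lemma IsBChain.isLevelFn_levelFnOfChain {c : Fin m → Finset ℤ} (hc : IsBChain n m c) :
    IsLevelFn m (levelFnOfChain c : Fin n → ℤ) := by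
  refine ⟨fun i => natAbs_depth_le c _, fun j hj1 hjm => ?_⟩
  set k : Fin m := ⟨j - 1, by omega⟩
  obtain ⟨x, hxk, hxj⟩ : ∃ x ∈ c k, depth c x ≤ j := by
    rcases hjm.eq_or_lt with rfl | hlt
    · obtain ⟨x, hx⟩ := (hc.mem_calB k).1
      exact ⟨x, hx, by have := natAbs_depth_le c x; omega⟩
    · obtain ⟨x, hx, hnx⟩ :=
        exists_of_ssubset (hc.ssubset k ⟨j, hlt⟩ (Fin.mk_lt_mk.mpr (by omega)))
      exact ⟨x, hx, not_lt.mp fun h => hnx (hc.mem_iff_lt_depth.mpr h)⟩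
  have hdepth : depth c x = j := by
    have := hc.mem_iff_lt_depth.mp hxk
    simp only [k] at this
    omega
  obtain ⟨hx0, hxn⟩ := (hc.mem_calB k).2.1 x hxk
  obtain ⟨i, rfl | rfl⟩ := exists_eq_label_or_eq_neg_label hx0 hxn
  · exact ⟨i, by rw [levelFnOfChain, hdepth, Int.natAbs_natCast]⟩
  · exact ⟨i, by rw [depth_neg] at hdepth; rw [levelFnOfChain]; omega⟩

lemma mem_chainOfLevelFn {g : Fin n → ℤ} {k : Fin m} {x : ℤ} :
    x ∈ chainOfLevelFn m g k ↔
      ∃ i, x = label i ∧ (k : ℤ) < g i ∨ x = -label i ∧ g i < -k := by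
  simp only [chainOfLevelFn, mem_union, mem_image, mem_filter, mem_univ, true_and]
  constructor
  · rintro (⟨i, h, rfl⟩ | ⟨i, h, rfl⟩)
    exacts [⟨i, Or.inl ⟨rfl, h⟩⟩, ⟨i, Or.inr ⟨rfl, h⟩⟩]
  · rintro ⟨i, ⟨rfl, h⟩ | ⟨rfl, h⟩⟩
    exacts [Or.inl ⟨i, h, rfl⟩, Or.inr ⟨i, h, rfl⟩]

lemma label_mem_chainOfLevelFn {g : Fin n → ℤ} {k : Fin m} {i : Fin n} :
    label i ∈ chainOfLevelFn m g k ↔ (k : ℤ) < g i := by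
  rw [mem_chainOfLevelFn]
  constructor
  · rintro ⟨j, ⟨h, hj⟩ | ⟨h, -⟩⟩
    · rwa [label_injective h]
    · exact absurd h (label_ne_neg_label i j)
  · exact fun h => ⟨i, Or.inl ⟨rfl, h⟩⟩

lemma neg_label_mem_chainOfLevelFn {g : Fin n → ℤ} {k : Fin m} {i : Fin n} :
    -label i ∈ chainOfLevelFn m g k ↔ g i < -k := by
  rw [mem_chainOfLevelFn]
  constructor
  · rintro ⟨j, ⟨h, -⟩ | ⟨h, hj⟩⟩
    · exact absurd h.symm (label_ne_neg_label j i)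
    · rwa [label_injective (neg_inj.mp h)]
  · exact fun h => ⟨i, Or.inr ⟨rfl, h⟩⟩

lemma IsLevelFn.isBChain_chainOfLevelFn {g : Fin n → ℤ} (hg : IsLevelFn m g) :
    IsBChain n m (chainOfLevelFn m g) := by
  have hwit : ∀ k : Fin m, ∃ i, (g i).natAbs = (k : ℕ) + 1 := fun k =>
    hg.exists_natAbs_eq _ (by omega) k.isLt
  refine ⟨fun k l hkl => ?_, fun k => ⟨?_, ?_, ?_⟩⟩
  · have hkl' : (k : ℤ) < l := by exact_mod_cast hkl
    obtain ⟨i, hi⟩ := hwit k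
    refine ssubset_iff_of_subset (fun x hx => ?_) |>.mpr ?_
    · obtain ⟨j, hj⟩ := mem_chainOfLevelFn.mp hx
      exact mem_chainOfLevelFn.mpr ⟨j, by omega⟩
    · rcases le_or_gt 0 (g i) with h | h
      · exact ⟨label i, label_mem_chainOfLevelFn.mpr (by omega),
          fun hl => by have := label_mem_chainOfLevelFn.mp hl; omega⟩
      · exact ⟨-label i, neg_label_mem_chainOfLevelFn.mpr (by omega),
          fun hl => by have := neg_label_mem_chainOfLevelFn.mp hl; omega⟩
  · obtain ⟨i, hi⟩ := hwit k
    rcases le_or_gt 0 (g i) with h | h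
    · exact ⟨label i, label_mem_chainOfLevelFn.mpr (by omega)⟩
    · exact ⟨-label i, neg_label_mem_chainOfLevelFn.mpr (by omega)⟩
  · intro x hx
    obtain ⟨i, ⟨rfl, -⟩ | ⟨rfl, -⟩⟩ := mem_chainOfLevelFn.mp hx <;>
      have := label_pos i <;> have := label_le i <;> simp only [abs_neg, abs_label] <;> omega
  · rintro j hj1 hjn ⟨hj, hnj⟩
    obtain ⟨i, ⟨rfl, h⟩ | ⟨rfl, h⟩⟩ := mem_chainOfLevelFn.mp hj
    · have := neg_label_mem_chainOfLevelFn.mp hnj; omega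
    · have := label_mem_chainOfLevelFn.mp (by simpa using hnj); omega

lemma IsLevelFn.levelFnOfChain_chainOfLevelFn {g : Fin n → ℤ} (hg : IsLevelFn m g) :
    levelFnOfChain (chainOfLevelFn m g) = g := by
  funext i
  have hle := hg.natAbs_le i
  have hcount : ∀ a : ℤ, #{l : Fin m | (l : ℤ) < a} = min m a.toNat := fun a => by
    rw [← Fin.card_filter_val_lt]
    congr 1
    ext l
    simp only [mem_filter, mem_univ, true_and]
    omega
  simp only [levelFnOfChain, depth, label_mem_chainOfLevelFn, neg_label_mem_chainOfLevelFn,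
    show ∀ l : Fin m, g i < -(l : ℤ) ↔ (l : ℤ) < -g i from fun l => by omega, hcount]
  omega

lemma IsBChain.chainOfLevelFn_levelFnOfChain {c : Fin m → Finset ℤ} (hc : IsBChain n m c) :
    chainOfLevelFn m (levelFnOfChain c : Fin n → ℤ) = c := by
  funext k
  ext x
  rw [mem_chainOfLevelFn]
  constructor
  · rintro ⟨i, hi⟩
    exact (hc.mem_iff_of_eq_label i (hi.imp And.left And.left)).mpr hi
  · intro hx
    obtain ⟨hx0, hxn⟩ := (hc.mem_calB k).2.1 x hx
    obtain ⟨i, hi⟩ := exists_eq_label_or_eq_neg_label hx0 hxn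
    exact ⟨i, (hc.mem_iff_of_eq_label i hi).mp hx⟩

lemma dB_eq_ncard_isLevelFn (n m : ℕ) :
    dB n m = {g : Fin n → ℤ | IsLevelFn m g}.ncard := by
  have hchains : {c : Fin m → Finset ℤ | (∀ k l : Fin m, k < l → c l ⊂ c k) ∧ ∀ k, c k ∈ calB n}
      = {c | IsBChain n m c} := Set.ext fun c => ⟨fun h => ⟨h.1, h.2⟩, fun h => ⟨h.1, h.2⟩⟩
  rw [dB, hchains]
  refine Set.ncard_congr (fun c _ => levelFnOfChain c) (fun c hc => hc.isLevelFn_levelFnOfChain)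
    (fun c c' hc hc' h => ?_) (fun g hg => ⟨_, hg.isBChain_chainOfLevelFn,
      hg.levelFnOfChain_chainOfLevelFn⟩)
  rw [← IsBChain.chainOfLevelFn_levelFnOfChain hc, h, IsBChain.chainOfLevelFn_levelFnOfChain hc']

lemma descSet_eq (w : Fin n → ℤ) :
    descSet n w = ({k | w k < Fin.prevOr w 0 k} : Finset (Fin n)) := rfl

lemma signedPerm_iff_exists_perm {w : Fin n → ℤ} :
    SignedPerm n w ↔ ∃ τ : Equiv.Perm (Fin n), ∀ k, |w k| = label (τ k) := by
  constructor
  · intro hw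
    have hex : ∀ k, ∃ i : Fin n, |w k| = label i := fun k =>
      ⟨⟨(|w k|).toNat - 1, by have := hw.1 k; omega⟩, by have := hw.1 k; simp only [label]; omega⟩
    choose τ hτ using hex
    have hinj : Function.Injective τ := fun k k' h => by
      obtain ⟨j, -, huniq⟩ := hw.2 |w k| (hw.1 k).1 (hw.1 k).2
      rw [huniq k rfl, huniq k' (by beta_reduce; rw [hτ, hτ, h])]
    exact ⟨Equiv.ofBijective τ (Finite.injective_iff_bijective.mp hinj), hτ⟩
  · rintro ⟨τ, hτ⟩
    refine ⟨fun k => ⟨by rw [hτ]; have := label_pos (τ k); omega, by rw [hτ]; exact label_le _⟩,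
      fun j hj1 hjn => ⟨τ.symm ⟨j.toNat - 1, by omega⟩, ?_, fun k hk => ?_⟩⟩
    · beta_reduce
      rw [hτ, Equiv.apply_symm_apply, label]; simp only; omega
    · rw [Equiv.eq_symm_apply]
      apply label_injective
      rw [← hτ, hk, label]; simp only; omega

lemma _root_.SignedPerm.ne_zero {w : Fin n → ℤ} (hw : SignedPerm n w) (k : Fin n) : w k ≠ 0 :=
  abs_pos.mp (one_pos.trans_le (hw.1 k).1)

/-! ### Sorting a level function into a signed permutation -/

def signedLabel (g : Fin n → ℤ) (i : Fin n) : ℤ := if 0 < g i then label i else -label i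

-- Decreasing signed labels within a level make every position of a level block but the first a
-- descent; the block of level 0 consists of negative letters, so its first position is one too.
def sortKey (g : Fin n → ℤ) (i : Fin n) : ℕ ×ₗ ℤ := toLex ((g i).natAbs, -signedLabel g i)

noncomputable def sortPerm (g : Fin n → ℤ) : Equiv.Perm (Fin n) := Tuple.sort (sortKey g)

noncomputable def toSignedPerm (g : Fin n → ℤ) (k : Fin n) : ℤ := signedLabel g (sortPerm g k)

noncomputable def sortedLevel (g : Fin n → ℤ) (k : Fin n) : ℕ := (g (sortPerm g k)).natAbs

noncomputable def levelPlateaus (g : Fin n → ℤ) : Finset (Fin n) :=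
  {k | sortedLevel g k = Fin.prevOr (sortedLevel g) 0 k}

lemma abs_signedLabel (g : Fin n → ℤ) (i : Fin n) : |signedLabel g i| = label i := by
  unfold signedLabel; split <;> simp [abs_label]

lemma sign_signedLabel_mul_natAbs (g : Fin n → ℤ) (i : Fin n) :
    (signedLabel g i).sign * (g i).natAbs = g i := by
  have := label_pos i
  unfold signedLabel
  split
  · rw [Int.sign_eq_one_of_pos this]; omega
  · rw [Int.sign_neg, Int.sign_eq_one_of_pos this]; omega

lemma sortKey_injective (g : Fin n → ℤ) : Function.Injective (sortKey g) := fun i j h => by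
  have h2 := congrArg (fun p => (ofLex p).2) h
  simp only [sortKey, ofLex_toLex, neg_inj] at h2
  exact label_injective (by rw [← abs_signedLabel g i, h2, abs_signedLabel])

lemma strictMono_sortKey_sortPerm (g : Fin n → ℤ) : StrictMono (sortKey g ∘ sortPerm g) :=
  (Tuple.monotone_sort _).strictMono_of_injective
    ((sortKey_injective g).comp (sortPerm g).injective)

lemma sortedLevel_mono (g : Fin n → ℤ) : Monotone (sortedLevel g) := fun k k' h => by
  have := (strictMono_sortKey_sortPerm g).monotone h
  simp only [Function.comp_apply, Prod.Lex.le_iff, sortKey, ofLex_toLex] at this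
  unfold sortedLevel
  omega

lemma toSignedPerm_lt_of_sortedLevel_eq (g : Fin n → ℤ) {k k' : Fin n} (h : k < k')
    (hl : sortedLevel g k = sortedLevel g k') : toSignedPerm g k' < toSignedPerm g k := by
  have := strictMono_sortKey_sortPerm g h
  simp only [Function.comp_apply, Prod.Lex.lt_iff, sortKey, ofLex_toLex] at this
  unfold sortedLevel at hl
  unfold toSignedPerm
  omega

lemma toSignedPerm_signedPerm (g : Fin n → ℤ) : SignedPerm n (toSignedPerm g) :=
  signedPerm_iff_exists_perm.mpr ⟨sortPerm g, fun _ => abs_signedLabel g _⟩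

lemma levelPlateaus_subset_descSet (g : Fin n → ℤ) :
    levelPlateaus g ⊆ descSet n (toSignedPerm g) := by
  intro k hk
  simp only [levelPlateaus, descSet_eq, mem_filter, mem_univ, true_and] at hk ⊢
  obtain h0 | ⟨j, hjk⟩ := k.val_eq_zero_or_exists_val_eq_succ
  · rw [Fin.prevOr_of_val_eq_zero _ _ h0] at hk ⊢
    have hg0 : g (sortPerm g k) = 0 := by unfold sortedLevel at hk; omega
    have := label_pos (sortPerm g k)
    simp only [toSignedPerm, signedLabel, hg0, lt_irrefl, if_false]
    omega
  · rw [Fin.prevOr_of_val_eq_succ _ _ hjk] at hk ⊢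
    exact toSignedPerm_lt_of_sortedLevel_eq g (Fin.lt_def.mpr (by omega)) hk.symm

lemma IsLevelFn.sortedLevel_le_prevOr_add_one {g : Fin n → ℤ} (hg : IsLevelFn m g)
    (k : Fin n) : sortedLevel g k ≤ Fin.prevOr (sortedLevel g) 0 k + 1 := by
  by_contra! hgap
  set v := Fin.prevOr (sortedLevel g) 0 k + 1
  have hvm : v ≤ m := by
    have := hg.natAbs_le (sortPerm g k)
    unfold sortedLevel at hgap
    omega
  obtain ⟨i, hi⟩ := hg.exists_natAbs_eq v (by omega) hvm
  set p := (sortPerm g).symm i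
  have hp : sortedLevel g p = v := by simp [sortedLevel, p, hi]
  rcases lt_or_ge p k with hpk | hkp
  · rw [Fin.lt_def] at hpk
    obtain h0 | ⟨j, hjk⟩ := k.val_eq_zero_or_exists_val_eq_succ
    · omega
    · have := sortedLevel_mono g (Fin.le_def.mpr (show (p : ℕ) ≤ j by omega))
      have hv : v = sortedLevel g j + 1 := by simp only [v, Fin.prevOr_of_val_eq_succ _ _ hjk]
      omega
  · have := sortedLevel_mono g hkp
    omega

def jumpCount (S : Finset (Fin n)) (k : Fin n) : ℕ := #{j ∈ Sᶜ | j ≤ k}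

lemma jumpCount_eq_prevOr_add (S : Finset (Fin n)) (k : Fin n) :
    jumpCount S k = Fin.prevOr (jumpCount S) 0 k + if k ∈ S then 0 else 1 := by
  have hlt : #{j ∈ Sᶜ | j < k} = Fin.prevOr (jumpCount S) 0 k := by
    obtain h0 | ⟨j, hjk⟩ := k.val_eq_zero_or_exists_val_eq_succ
    · rw [Fin.prevOr_of_val_eq_zero _ _ h0, card_eq_zero, filter_eq_empty_iff]
      exact fun j _ h => by rw [Fin.lt_def] at h; omega
    · rw [Fin.prevOr_of_val_eq_succ _ _ hjk, jumpCount]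
      congr 1
      ext i
      simp only [mem_filter, Fin.lt_def, Fin.le_def, and_congr_right_iff]
      omega
  rw [← hlt, jumpCount, filter_congr fun j _ => le_iff_lt_or_eq, filter_or,
    card_union_of_disjoint (disjoint_filter.mpr fun j _ h1 h2 => h1.ne h2), filter_eq']
  by_cases hk : k ∈ S <;> simp [hk]

lemma jumpCount_le_card_compl (S : Finset (Fin n)) (k : Fin n) : jumpCount S k ≤ #Sᶜ :=
  card_filter_le _ _

lemma IsLevelFn.sortedLevel_eq_jumpCount {g : Fin n → ℤ} (hg : IsLevelFn m g) :
    sortedLevel g = jumpCount (levelPlateaus g) := by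
  refine Fin.eq_of_forall_eq_step_prevOr (fun p k => p + if k ∈ levelPlateaus g then 0 else 1)
    (fun k => ?_) (jumpCount_eq_prevOr_add _)
  have h1 := hg.sortedLevel_le_prevOr_add_one k
  have h2 := Fin.prevOr_le (sortedLevel_mono g) (Nat.zero_le (sortedLevel g k))
  simp only [levelPlateaus, mem_filter, mem_univ, true_and]
  split_ifs <;> omega

lemma exists_jumpCount_eq (S : Finset (Fin n)) {L : ℕ} (hL1 : 1 ≤ L) (hL : L ≤ #Sᶜ) :
    ∃ k, jumpCount S k = L := by
  have hne : (Sᶜ).Nonempty := card_pos.mp (by omega)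
  have hT : ({k | L ≤ jumpCount S k} : Finset (Fin n)).Nonempty := by
    refine ⟨(Sᶜ).max' hne, mem_filter.mpr ⟨mem_univ _, ?_⟩⟩
    rwa [jumpCount, filter_true_of_mem fun j hj => le_max' _ j hj]
  set k := ({k | L ≤ jumpCount S k} : Finset (Fin n)).min' hT
  have hk : L ≤ jumpCount S k := (mem_filter.mp (min'_mem _ hT)).2
  have hprev : Fin.prevOr (jumpCount S) 0 k < L := by
    obtain h0 | ⟨j, hjk⟩ := k.val_eq_zero_or_exists_val_eq_succ
    · rw [Fin.prevOr_of_val_eq_zero _ _ h0]; omega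
    · rw [Fin.prevOr_of_val_eq_succ _ _ hjk]
      by_contra! hj
      have := min'_le ({k | L ≤ jumpCount S k} : Finset (Fin n)) j (by simpa using hj)
      rw [Fin.le_def] at this
      omega
  have := jumpCount_eq_prevOr_add S k
  exact ⟨k, by split_ifs at this <;> omega⟩

lemma IsLevelFn.card_compl_levelPlateaus {g : Fin n → ℤ} (hg : IsLevelFn m g) :
    #(levelPlateaus g)ᶜ = m := by
  apply le_antisymm
  · rcases Nat.eq_zero_or_pos #(levelPlateaus g)ᶜ with h | h
    · omega
    · obtain ⟨k, hk⟩ := exists_jumpCount_eq (levelPlateaus g) h le_rfl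
      rw [← hk, ← hg.sortedLevel_eq_jumpCount]
      exact hg.natAbs_le _
  · rcases Nat.eq_zero_or_pos m with h | h
    · omega
    · obtain ⟨i, hi⟩ := hg.exists_natAbs_eq m h le_rfl
      have : sortedLevel g ((sortPerm g).symm i) = m := by simp [sortedLevel, hi]
      rw [← this, hg.sortedLevel_eq_jumpCount]
      exact jumpCount_le_card_compl _ _

lemma neg_of_jumpCount_eq_zero {w : Fin n → ℤ} {S : Finset (Fin n)} (hS : S ⊆ descSet n w)
    (k : Fin n) (hk : jumpCount S k = 0) : w k < 0 := by
  have key : ∀ k, jumpCount S k = 0 →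
      w k < Fin.prevOr w 0 k ∧ Fin.prevOr (jumpCount S) 0 k = 0 := fun k hk => by
    have hstep := jumpCount_eq_prevOr_add S k
    have hkS : k ∈ S := by by_contra h; rw [if_neg h] at hstep; omega
    exact ⟨(mem_filter.mp (hS hkS)).2, by rw [if_pos hkS] at hstep; omega⟩
  obtain ⟨k, hkn⟩ := k
  induction k with
  | zero => simpa [Fin.prevOr_of_val_eq_zero w 0 (k := ⟨0, hkn⟩) rfl] using (key _ hk).1
  | succ k ih =>
    obtain ⟨h1, h2⟩ := key _ hk
    rw [Fin.prevOr_of_val_eq_succ _ _ (j := ⟨k, by omega⟩) rfl] at h1 h2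
    exact h1.trans (ih _ h2)

-- For a signed permutation `w` the sum has the single term `k` with `|w k| = i + 1`.
def levelFnOfSignedPerm (w : Fin n → ℤ) (S : Finset (Fin n)) (i : Fin n) : ℤ :=
  ∑ k with |w k| = label i, (w k).sign * jumpCount S k

section levelFnOfSignedPerm

variable {w : Fin n → ℤ} (hw : SignedPerm n w) (S : Finset (Fin n))
include hw

lemma levelFnOfSignedPerm_apply {i k : Fin n} (hk : |w k| = label i) :
    levelFnOfSignedPerm w S i = (w k).sign * jumpCount S k := by
  obtain ⟨k₀, -, huniq⟩ := hw.2 (label i) (label_pos i) (label_le i)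
  have : ({k | |w k| = label i} : Finset (Fin n)) = {k} := by
    ext j
    simp only [mem_filter, mem_univ, true_and, mem_singleton]
    exact ⟨fun hj => (huniq j hj).trans (huniq k hk).symm, fun hj => hj ▸ hk⟩
  rw [levelFnOfSignedPerm, this, sum_singleton]

lemma natAbs_levelFnOfSignedPerm {i k : Fin n} (hk : |w k| = label i) :
    (levelFnOfSignedPerm w S i).natAbs = jumpCount S k := by
  rw [levelFnOfSignedPerm_apply hw S hk, Int.natAbs_mul, Int.natAbs_sign_of_ne_zero (hw.ne_zero k),
    one_mul, Int.natAbs_natCast]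

lemma isLevelFn_levelFnOfSignedPerm (hS : #Sᶜ = m) : IsLevelFn m (levelFnOfSignedPerm w S) := by
  obtain ⟨τ, hτ⟩ := signedPerm_iff_exists_perm.mp hw
  have hτ' : ∀ i, |w (τ.symm i)| = label i := fun i => by rw [hτ, Equiv.apply_symm_apply]
  refine ⟨fun i => ?_, fun L hL1 hLm => ?_⟩
  · rw [natAbs_levelFnOfSignedPerm hw S (hτ' i), ← hS]
    exact jumpCount_le_card_compl S _
  · obtain ⟨k, hk⟩ := exists_jumpCount_eq S hL1 (hS ▸ hLm)
    exact ⟨τ k, by rw [natAbs_levelFnOfSignedPerm hw S (hτ k), hk]⟩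

section sorting

variable {S} {τ : Equiv.Perm (Fin n)} (hτ : ∀ k, |w k| = label (τ k)) (hS : S ⊆ descSet n w)
include hτ hS

lemma signedLabel_levelFnOfSignedPerm (k : Fin n) :
    signedLabel (levelFnOfSignedPerm w S) (τ k) = w k := by
  rw [signedLabel, levelFnOfSignedPerm_apply hw S (hτ k), ← hτ k]
  rcases lt_or_gt_of_ne (hw.ne_zero k) with hneg | hpos
  · rw [Int.sign_eq_neg_one_of_neg hneg, if_neg (by omega), abs_of_neg hneg, neg_neg]
  · have : jumpCount S k ≠ 0 := fun h0 => by
      have := neg_of_jumpCount_eq_zero hS k h0; omega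
    rw [Int.sign_eq_one_of_pos hpos, if_pos (by omega), abs_of_pos hpos]

lemma sortKey_levelFnOfSignedPerm (k : Fin n) :
    sortKey (levelFnOfSignedPerm w S) (τ k) = toLex (jumpCount S k, -w k) := by
  rw [sortKey, natAbs_levelFnOfSignedPerm hw S (hτ k), signedLabel_levelFnOfSignedPerm hw hτ hS]

lemma sortPerm_levelFnOfSignedPerm : sortPerm (levelFnOfSignedPerm w S) = τ := by
  symm
  rw [sortPerm, Tuple.eq_sort_iff]
  refine ⟨Fin.monotone_of_forall_val_eq_succ fun j k hjk => ?_, fun i j hij h =>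
    absurd (sortKey_injective _ h) (τ.injective.ne hij.ne)⟩
  have hstep := jumpCount_eq_prevOr_add S k
  rw [Fin.prevOr_of_val_eq_succ _ _ hjk] at hstep
  simp only [Function.comp_apply, sortKey_levelFnOfSignedPerm hw hτ hS, Prod.Lex.le_iff,
    ofLex_toLex]
  by_cases hkS : k ∈ S
  · have hdesc := hS hkS
    rw [descSet_eq, mem_filter, Fin.prevOr_of_val_eq_succ _ _ hjk] at hdesc
    rw [if_pos hkS] at hstep
    omega
  · rw [if_neg hkS] at hstep
    omega

end sorting

variable {S}

lemma toSignedPerm_levelFnOfSignedPerm (hS : S ⊆ descSet n w) :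
    toSignedPerm (levelFnOfSignedPerm w S) = w := by
  obtain ⟨τ, hτ⟩ := signedPerm_iff_exists_perm.mp hw
  funext k
  rw [toSignedPerm, sortPerm_levelFnOfSignedPerm hw hτ hS, signedLabel_levelFnOfSignedPerm hw hτ hS]

lemma levelPlateaus_levelFnOfSignedPerm (hS : S ⊆ descSet n w) :
    levelPlateaus (levelFnOfSignedPerm w S) = S := by
  obtain ⟨τ, hτ⟩ := signedPerm_iff_exists_perm.mp hw
  have hlevel : sortedLevel (levelFnOfSignedPerm w S) = jumpCount S := funext fun k => by
    rw [sortedLevel, sortPerm_levelFnOfSignedPerm hw hτ hS, natAbs_levelFnOfSignedPerm hw S (hτ k)]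
  ext k
  have := jumpCount_eq_prevOr_add S k
  simp only [levelPlateaus, hlevel, mem_filter, mem_univ, true_and]
  split_ifs at this with hkS <;> simp only [hkS, iff_true, iff_false] <;> omega

end levelFnOfSignedPerm

lemma IsLevelFn.levelFnOfSignedPerm_toSignedPerm {g : Fin n → ℤ} (hg : IsLevelFn m g) :
    levelFnOfSignedPerm (toSignedPerm g) (levelPlateaus g) = g := by
  funext i
  have hk : |toSignedPerm g ((sortPerm g).symm i)| = label i := by
    rw [toSignedPerm, Equiv.apply_symm_apply, abs_signedLabel]
  rw [levelFnOfSignedPerm_apply (toSignedPerm_signedPerm g) _ hk, ← hg.sortedLevel_eq_jumpCount,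
    sortedLevel, toSignedPerm, Equiv.apply_symm_apply, sign_signedLabel_mul_natAbs]

/-! ### Counting -/

open Classical in
noncomputable def signedPerms (n : ℕ) : Finset (Fin n → ℤ) :=
  (Fintype.piFinset fun _ : Fin n => Icc (-(n : ℤ)) n).filter (SignedPerm n)

lemma mem_signedPerms {w : Fin n → ℤ} : w ∈ signedPerms n ↔ SignedPerm n w := by
  classical
  rw [signedPerms, mem_filter, Fintype.mem_piFinset, and_iff_right_iff_imp]
  exact fun hw k => mem_Icc.mpr (abs_le.mp (hw.1 k).2)

lemma ncard_isLevelFn (hmn : m ≤ n) :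
    {g : Fin n → ℤ | IsLevelFn m g}.ncard =
      ∑ w ∈ signedPerms n, (#(descSet n w)).choose (n - m) := by
  simp_rw [← card_powersetCard, ← card_sigma, ← Set.ncard_coe_finset]
  have hcompl : ∀ S : Finset (Fin n), #S = n - m ↔ #Sᶜ = m := fun S => by
    have := card_le_univ S
    rw [card_compl, Fintype.card_fin] at *
    omega
  refine Set.ncard_congr (fun g _ => ⟨toSignedPerm g, levelPlateaus g⟩) (fun g hg => ?_)
    (fun g g' hg hg' h => ?_) (fun ⟨w, S⟩ hwS => ?_)
  · simp only [coe_sigma, Set.mem_sigma_iff, mem_coe, mem_signedPerms, mem_powersetCard]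
    exact ⟨toSignedPerm_signedPerm g, levelPlateaus_subset_descSet g,
      (hcompl _).mpr hg.card_compl_levelPlateaus⟩
  · obtain ⟨h1, h2⟩ := Sigma.mk.inj_iff.mp h
    rw [← hg.levelFnOfSignedPerm_toSignedPerm, ← hg'.levelFnOfSignedPerm_toSignedPerm, h1,
      eq_of_heq h2]
  · simp only [coe_sigma, Set.mem_sigma_iff, mem_coe, mem_signedPerms, mem_powersetCard] at hwS
    obtain ⟨hw, hS, hcard⟩ := hwS
    exact ⟨levelFnOfSignedPerm w S, isLevelFn_levelFnOfSignedPerm hw S ((hcompl S).mp hcard),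
      by rw [toSignedPerm_levelFnOfSignedPerm hw hS, levelPlateaus_levelFnOfSignedPerm hw hS]⟩

lemma card_descSet_le (w : Fin n → ℤ) : #(descSet n w) ≤ n :=
  (card_filter_le _ _).trans_eq (card_fin n)

open Polynomial in
lemma sum_dB_mul_X_sub_one_pow (n : ℕ) :
    ∑ m ∈ range (n + 1), (dB n m : ℤ[X]) * (X - 1) ^ (n - m) =
      ∑ w ∈ signedPerms n, (X : ℤ[X]) ^ #(descSet n w) := by
  calc ∑ m ∈ range (n + 1), (dB n m : ℤ[X]) * (X - 1) ^ (n - m)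
      = ∑ m ∈ range (n + 1), ∑ w ∈ signedPerms n,
          ((#(descSet n w)).choose (n - m) : ℤ[X]) * (X - 1) ^ (n - m) :=
        sum_congr rfl fun m hm => by
          rw [dB_eq_ncard_isLevelFn, ncard_isLevelFn (Nat.lt_succ_iff.mp (mem_range.mp hm)),
            Nat.cast_sum, sum_mul]
    _ = ∑ j ∈ range (n + 1), ∑ w ∈ signedPerms n,
          ((#(descSet n w)).choose j : ℤ[X]) * (X - 1) ^ j := by
      simpa using sum_range_reflect (fun j => ∑ w ∈ signedPerms n,
          ((#(descSet n w)).choose j : ℤ[X]) * (X - 1) ^ j) (n + 1)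
    _ = ∑ w ∈ signedPerms n, (X : ℤ[X]) ^ #(descSet n w) := by
      rw [sum_comm]
      exact sum_congr rfl fun w _ =>
        (pow_eq_sum_range_choose_mul_sub_one_pow X (card_descSet_le w)).symm

lemma coeff_sum_X_pow_card_descSet (i : ℕ) :
    (∑ w ∈ signedPerms n, (Polynomial.X : Polynomial ℤ) ^ #(descSet n w)).coeff i =
      {w : Fin n → ℤ | SignedPerm n w ∧ #(descSet n w) = i}.ncard := by
  have hset : {w : Fin n → ℤ | SignedPerm n w ∧ #(descSet n w) = i} =
      ↑({w ∈ signedPerms n | i = #(descSet n w)}) := by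
    ext w
    simp [mem_signedPerms, eq_comm]
  simp_rw [Polynomial.finsetSum_coeff, Polynomial.coeff_X_pow]
  rw [sum_boole, hset, Set.ncard_coe_finset]

end TypeBFan

open Classical in
theorem stmt9_general (n : ℕ) :
    (∑ m ∈ Finset.range (n + 1), (dB n m : Polynomial ℤ) * (Polynomial.X - 1) ^ (n - m))
      = ∑ w ∈ Fintype.piFinset (fun _ : Fin n => Finset.Icc (-(n : ℤ)) (n : ℤ)),
          (if SignedPerm n w then Polynomial.X ^ (descSet n w).card else 0)
    ∧ ∀ i : ℕ,
        (∑ m ∈ Finset.range (n + 1),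
            (dB n m : Polynomial ℤ) * (Polynomial.X - 1) ^ (n - m)).coeff i
          = (Set.ncard {w : Fin n → ℤ | SignedPerm n w ∧ (descSet n w).card = i} : ℤ) := by
  have hsum := TypeBFan.sum_dB_mul_X_sub_one_pow n
  exact ⟨hsum.trans (sum_filter _ _), fun i => by
    rw [hsum, TypeBFan.coeff_sum_X_pow_card_descSet]⟩

open Classical in
/-- In `ℤ[t]`: `Σ_{m=0}^{n} d_m(n)·(t-1)^{n-m} = Σ_w t^{|Desc(w)|}`, the sum running over
all `2^n·n!` signed permutations `w` of `{1, …, n}`; in particular `β_{2i}(X(B_n))` equals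
the number of signed permutations with exactly `i` descents. -/
theorem stmt9 (n : ℕ) (hn : 1 ≤ n) :
    (∑ m ∈ Finset.range (n + 1), (dB n m : Polynomial ℤ) * (Polynomial.X - 1) ^ (n - m))
      = ∑ w ∈ Fintype.piFinset (fun _ : Fin n => Finset.Icc (-(n : ℤ)) (n : ℤ)),
          (if SignedPerm n w then Polynomial.X ^ (descSet n w).card else 0)
    ∧ ∀ i : ℕ,
        (∑ m ∈ Finset.range (n + 1),
            (dB n m : Polynomial ℤ) * (Polynomial.X - 1) ^ (n - m)).coeff i
          = (Set.ncard {w : Fin n → ℤ | SignedPerm n w ∧ (descSet n w).card = i} : ℤ) :=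
  stmt9_general n
end
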